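/- arXiv:1404.5601 — 3 statements merged into one kernel-verified Lean document; each statement's English description precedes it below -/
import Mathlib

section
/- Let (X_n, R_n), n ≥ 1, be an i.i.d. sequence of pairs with X_n > 0, E[X_1] = τ < ∞, E[|R_1|] < ∞, E[R_1] = r. With N(t) the renewal counting process and R(t) = Σ_{n=1}^{N(t)} R_n, one has E[R(t)]/t → r/τ as t → ∞. -/
open MeasureTheory ProbabilityTheory Filter

/-- Renewal epoch: `rS X n ω = X_1 + ... + X_n` (0-indexed: sum of `X 0, ..., X (n-1)`). -/
noncomputable def rS {Ω : Type*} (X : ℕ → Ω → ℝ) (n : ℕ) (ω : Ω) : ℝ :=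
  ∑ i ∈ Finset.range n, X i ω

/-- Renewal counting process: `rN X t ω = sup {n : S_n ≤ t}`. -/
noncomputable def rN {Ω : Type*} (X : ℕ → Ω → ℝ) (t : ℝ) (ω : Ω) : ℕ :=
  sSup {n | rS X n ω ≤ t}

set_option linter.unusedSectionVars false
set_option maxHeartbeats 1000000

section Renewal

variable {Ω : Type*} [MeasurableSpace Ω] (μ : Measure Ω) [IsProbabilityMeasure μ]
  (X R : ℕ → Ω → ℝ)

lemma measurable_rS (hmeas : ∀ n, Measurable fun ω => (X n ω, R n ω)) (n : ℕ) :
    Measurable (rS X n) := by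
  have hX : ∀ k, Measurable (X k) := fun k => (measurable_fst.comp (hmeas k))
  exact Finset.measurable_sum _ fun i _ => hX i

lemma indep_pair_rS (hmeas : ∀ n, Measurable fun ω => (X n ω, R n ω))
    (hindep : iIndepFun (fun n ω => (X n ω, R n ω)) μ) (n : ℕ) :
    IndepFun (fun ω => (X n ω, R n ω)) (rS X n) μ := by
  have h := (hindep.indepFun_sum_range_succ hmeas n).symm
  have hfst : rS X n = (fun p : ℝ × ℝ => p.1) ∘ (∑ j ∈ Finset.range n, fun ω => (X j ω, R j ω)) := by
    funext ω
    simp [rS, Finset.sum_apply, Prod.fst_sum]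
  rw [hfst]
  exact h.comp measurable_id measurable_fst

lemma identdistrib_comp (hident : ∀ n, IdentDistrib (fun ω => (X n ω, R n ω))
      (fun ω => (X 0 ω, R 0 ω)) μ μ) {φ : ℝ × ℝ → ℝ} (hφ : Measurable φ) (n : ℕ) :
    IdentDistrib (fun ω => φ (X n ω, R n ω)) (fun ω => φ (X 0 ω, R 0 ω)) μ μ :=
  (hident n).comp hφ

/-- The key factorization identity. -/
lemma factor (hmeas : ∀ n, Measurable fun ω => (X n ω, R n ω))
    (hindep : iIndepFun (fun n ω => (X n ω, R n ω)) μ)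
    (hident : ∀ n, IdentDistrib (fun ω => (X n ω, R n ω)) (fun ω => (X 0 ω, R 0 ω)) μ μ)
    {φ : ℝ × ℝ → ℝ} (hφ : Measurable φ)
    (hφint : Integrable (fun ω => φ (X 0 ω, R 0 ω)) μ) (n : ℕ) (t : ℝ) :
    ∫ ω, φ (X n ω, R n ω) * ({ω | rS X n ω ≤ t}).indicator (fun _ => (1:ℝ)) ω ∂μ
      = (∫ ω, φ (X 0 ω, R 0 ω) ∂μ) * (μ {ω | rS X n ω ≤ t}).toReal := by
  have hind : IndepFun (fun ω => φ (X n ω, R n ω))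
      (fun ω => (Set.Iic t).indicator (fun _ => (1:ℝ)) (rS X n ω)) μ :=
    (indep_pair_rS μ X R hmeas hindep n).comp hφ
      ((measurable_const (a := (1:ℝ))).indicator measurableSet_Iic)
  have heq : (fun ω => (Set.Iic t).indicator (fun _ => (1:ℝ)) (rS X n ω))
      = ({ω | rS X n ω ≤ t}).indicator (fun _ => (1:ℝ)) := by
    funext ω
    by_cases h : rS X n ω ≤ t <;> simp [Set.indicator_apply, Set.mem_Iic, h]
  rw [heq] at hind
  have hint1 : Integrable (fun ω => φ (X n ω, R n ω)) μ :=
    ((identdistrib_comp μ X R hident hφ n).integrable_iff).2 hφint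
  have hmS : MeasurableSet {ω | rS X n ω ≤ t} :=
    measurableSet_le (measurable_rS X R hmeas n) measurable_const
  have hint2 : Integrable (({ω | rS X n ω ≤ t}).indicator (fun _ => (1:ℝ))) μ :=
    (integrable_const (1:ℝ)).indicator hmS
  rw [show (fun ω => φ (X n ω, R n ω) * ({ω | rS X n ω ≤ t}).indicator (fun _ => (1:ℝ)) ω)
      = (fun ω => φ (X n ω, R n ω)) * ({ω | rS X n ω ≤ t}).indicator (fun _ => (1:ℝ)) from rfl,
    hind.integral_mul_eq_mul_integral hint1.aestronglyMeasurable hint2.aestronglyMeasurable,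
    (identdistrib_comp μ X R hident hφ n).integral_eq]
  congr 1
  rw [integral_indicator_const (1:ℝ) hmS]
  simp
  rfl

/-- The Laplace transform value at 1. -/
noncomputable def rho (μ : Measure Ω) (X : ℕ → Ω → ℝ) : ℝ := ∫ ω, Real.exp (-(X 0 ω)) ∂μ

lemma rho_nonneg : 0 ≤ rho μ X := integral_nonneg fun ω => (Real.exp_pos _).le

lemma rho_lt_one (hmeas : ∀ n, Measurable fun ω => (X n ω, R n ω)) (hpos : ∀ n ω, 0 < X n ω) :
    rho μ X < 1 := by
  have hX : Measurable (X 0) := measurable_fst.comp (hmeas 0)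
  have hexp : Integrable (fun ω => Real.exp (-(X 0 ω))) μ := by
    refine (integrable_const (1:ℝ)).mono' ((hX.neg.exp).aestronglyMeasurable) ?_
    filter_upwards with ω
    rw [Real.norm_eq_abs, abs_of_pos (Real.exp_pos _)]
    exact Real.exp_le_one_iff.2 (by linarith [hpos 0 ω])
  have hint : Integrable (fun ω => 1 - Real.exp (-(X 0 ω))) μ :=
    (integrable_const (1:ℝ)).sub hexp
  have h0 : 0 < ∫ ω, (1 - Real.exp (-(X 0 ω))) ∂μ := by
    rw [integral_pos_iff_support_of_nonneg]
    · have : (Function.support fun ω => 1 - Real.exp (-(X 0 ω))) = Set.univ := by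
        ext ω
        simp only [Function.mem_support, Set.mem_univ, iff_true]
        have : Real.exp (-(X 0 ω)) < 1 := Real.exp_lt_one_iff.2 (by linarith [hpos 0 ω])
        intro h; linarith
      rw [this]
      simpa using (IsProbabilityMeasure.ne_zero μ)
    · intro ω
      have : Real.exp (-(X 0 ω)) ≤ 1 := Real.exp_le_one_iff.2 (by linarith [hpos 0 ω])
      simp only [Pi.zero_apply]; linarith
    · exact hint
  have : ∫ ω, (1 - Real.exp (-(X 0 ω))) ∂μ = 1 - rho μ X := by
    rw [integral_sub (integrable_const 1) hexp]
    simp [rho]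
  rw [this] at h0; linarith

lemma integrable_exp_neg_rS (hmeas : ∀ n, Measurable fun ω => (X n ω, R n ω)) (n : ℕ)
    (hpos : ∀ n ω, 0 < X n ω) :
    Integrable (fun ω => Real.exp (-(rS X n ω))) μ := by
  refine (integrable_const (1:ℝ)).mono'
    (((measurable_rS X R hmeas n).neg.exp).aestronglyMeasurable) ?_
  filter_upwards with ω
  rw [Real.norm_eq_abs, abs_of_pos (Real.exp_pos _)]
  refine Real.exp_le_one_iff.2 (neg_nonpos.2 (Finset.sum_nonneg fun i _ => (hpos i ω).le))

lemma integral_exp_neg_rS (hmeas : ∀ n, Measurable fun ω => (X n ω, R n ω))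
    (hindep : iIndepFun (fun n ω => (X n ω, R n ω)) μ)
    (hident : ∀ n, IdentDistrib (fun ω => (X n ω, R n ω)) (fun ω => (X 0 ω, R 0 ω)) μ μ)
    (hpos : ∀ n ω, 0 < X n ω) (n : ℕ) :
    ∫ ω, Real.exp (-(rS X n ω)) ∂μ = (rho μ X) ^ n := by
  induction n with
  | zero => simp [rS]
  | succ n ih =>
    have hf : ∀ i, Measurable (fun ω => Real.exp (-(X i ω))) :=
      fun i => ((measurable_fst.comp (hmeas i)).neg.exp)
    have hiI : iIndepFun (fun i ω => Real.exp (-(X i ω))) μ := by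
      have := hindep.comp (fun _ (p : ℝ × ℝ) => Real.exp (-p.1))
        (fun _ => measurable_fst.neg.exp)
      exact this
    have hprod : ∀ m, (fun ω => Real.exp (-(rS X m ω)))
        = (∏ j ∈ Finset.range m, fun ω => Real.exp (-(X j ω))) := by
      intro m; funext ω
      rw [Finset.prod_apply]
      rw [rS, ← Real.exp_sum]
      congr 1
      rw [← Finset.sum_neg_distrib]
    have hindS : IndepFun (fun ω => Real.exp (-(rS X n ω))) (fun ω => Real.exp (-(X n ω))) μ := by
      rw [hprod n]
      exact hiI.indepFun_prod_range_succ hf n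
    have : (fun ω => Real.exp (-(rS X (n+1) ω)))
        = fun ω => Real.exp (-(rS X n ω)) * Real.exp (-(X n ω)) := by
      funext ω
      rw [← Real.exp_add, rS, rS, Finset.sum_range_succ]
      ring_nf
    rw [this]
    have hintn := integrable_exp_neg_rS μ X R hmeas n hpos
    have hint1 : Integrable (fun ω => Real.exp (-(X n ω))) μ := by
      refine (integrable_const (1:ℝ)).mono' ((hf n).aestronglyMeasurable) ?_
      filter_upwards with ω
      rw [Real.norm_eq_abs, abs_of_pos (Real.exp_pos _)]
      exact Real.exp_le_one_iff.2 (by linarith [hpos n ω])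
    have := hindS.integral_mul_eq_mul_integral hintn.aestronglyMeasurable hint1.aestronglyMeasurable
    rw [show (fun ω => Real.exp (-(rS X n ω)) * Real.exp (-(X n ω)))
      = (fun ω => Real.exp (-(rS X n ω))) * (fun ω => Real.exp (-(X n ω))) from rfl, this, ih]
    have hid : IdentDistrib (fun ω => Real.exp (-(X n ω))) (fun ω => Real.exp (-(X 0 ω))) μ μ :=
      (hident n).comp (measurable_fst.neg.exp)
    rw [hid.integral_eq]
    rw [pow_succ, rho]

lemma meas_rS_le_toReal_le (hmeas : ∀ n, Measurable fun ω => (X n ω, R n ω))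
    (hindep : iIndepFun (fun n ω => (X n ω, R n ω)) μ)
    (hident : ∀ n, IdentDistrib (fun ω => (X n ω, R n ω)) (fun ω => (X 0 ω, R 0 ω)) μ μ)
    (hpos : ∀ n ω, 0 < X n ω) (n : ℕ) (t : ℝ) :
    (μ {ω | rS X n ω ≤ t}).toReal ≤ Real.exp t * (rho μ X) ^ n := by
  have hsub : {ω | rS X n ω ≤ t} ⊆ {ω | Real.exp (-t) ≤ Real.exp (-(rS X n ω))} := by
    intro ω h
    exact Real.exp_le_exp.2 (by simpa using h)
  have hmono := measure_mono (μ := μ) hsub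
  have hml := mul_meas_ge_le_integral_of_nonneg
    (f := fun ω => Real.exp (-(rS X n ω))) (μ := μ)
    (Filter.Eventually.of_forall fun ω => (Real.exp_pos _).le)
    (integrable_exp_neg_rS μ X R hmeas n hpos) (Real.exp (-t))
  rw [integral_exp_neg_rS μ X R hmeas hindep hident hpos n] at hml
  have h1 : (μ {ω | rS X n ω ≤ t}).toReal
      ≤ (μ {ω | Real.exp (-t) ≤ Real.exp (-(rS X n ω))}).toReal := by
    exact ENNReal.toReal_mono (measure_ne_top μ _) hmono
  have h2 : Real.exp (-t) * (μ {ω | Real.exp (-t) ≤ Real.exp (-(rS X n ω))}).toReal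
      ≤ (rho μ X) ^ n := hml
  calc (μ {ω | rS X n ω ≤ t}).toReal
      ≤ (μ {ω | Real.exp (-t) ≤ Real.exp (-(rS X n ω))}).toReal := h1
    _ = Real.exp t * (Real.exp (-t) * (μ {ω | Real.exp (-t) ≤ Real.exp (-(rS X n ω))}).toReal) := by
        rw [← mul_assoc, ← Real.exp_add]; simp
    _ ≤ Real.exp t * (rho μ X) ^ n :=
        mul_le_mul_of_nonneg_left h2 (Real.exp_pos t).le

lemma summable_meas_rS (hmeas : ∀ n, Measurable fun ω => (X n ω, R n ω))
    (hindep : iIndepFun (fun n ω => (X n ω, R n ω)) μ)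
    (hident : ∀ n, IdentDistrib (fun ω => (X n ω, R n ω)) (fun ω => (X 0 ω, R 0 ω)) μ μ)
    (hpos : ∀ n ω, 0 < X n ω) (t : ℝ) :
    Summable (fun n => (μ {ω | rS X n ω ≤ t}).toReal) := by
  refine Summable.of_nonneg_of_le (fun n => ENNReal.toReal_nonneg)
    (fun n => meas_rS_le_toReal_le μ X R hmeas hindep hident hpos n t) ?_
  exact (summable_geometric_of_lt_one (rho_nonneg μ X)
    (rho_lt_one μ X R hmeas hpos)).mul_left _

/-- The renewal function (expected number of renewals in `[0,t]`, plus one). -/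
noncomputable def rm (μ : Measure Ω) (X : ℕ → Ω → ℝ) (t : ℝ) : ℝ :=
  ∑' n, (μ {ω | rS X n ω ≤ t}).toReal

lemma tsum_meas_rS_ne_top (hmeas : ∀ n, Measurable fun ω => (X n ω, R n ω))
    (hindep : iIndepFun (fun n ω => (X n ω, R n ω)) μ)
    (hident : ∀ n, IdentDistrib (fun ω => (X n ω, R n ω)) (fun ω => (X 0 ω, R 0 ω)) μ μ)
    (hpos : ∀ n ω, 0 < X n ω) (t : ℝ) :
    (∑' n, μ {ω | rS X n ω ≤ t}) ≠ ⊤ := by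
  have h := (summable_meas_rS μ X R hmeas hindep hident hpos t)
  have h2 : Summable (fun n => (μ {ω | rS X n ω ≤ t}).toNNReal) := by
    rw [← NNReal.summable_coe]
    exact h
  have h3 : (∑' n, ((μ {ω | rS X n ω ≤ t}).toNNReal : ENNReal)) ≠ ⊤ :=
    ENNReal.tsum_coe_ne_top_iff_summable.2 h2
  convert h3 using 2
  funext n
  exact (ENNReal.coe_toNNReal (measure_ne_top μ _)).symm

/-- Almost surely, only finitely many renewal epochs occur before any given time. -/
lemma ae_finite_rS (hmeas : ∀ n, Measurable fun ω => (X n ω, R n ω))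
    (hindep : iIndepFun (fun n ω => (X n ω, R n ω)) μ)
    (hident : ∀ n, IdentDistrib (fun ω => (X n ω, R n ω)) (fun ω => (X 0 ω, R 0 ω)) μ μ)
    (hpos : ∀ n ω, 0 < X n ω) :
    ∀ᵐ ω ∂μ, ∀ t : ℝ, {n | rS X n ω ≤ t}.Finite := by
  have hk : ∀ k : ℕ, ∀ᵐ ω ∂μ, {n | rS X n ω ≤ (k:ℝ)}.Finite := by
    intro k
    have := MeasureTheory.ae_eventually_notMem
      (s := fun n => {ω | rS X n ω ≤ (k:ℝ)})
      (tsum_meas_rS_ne_top μ X R hmeas hindep hident hpos (k:ℝ))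
    filter_upwards [this] with ω hω
    rw [Filter.eventually_atTop] at hω
    obtain ⟨N, hN⟩ := hω
    apply Set.Finite.subset (Set.finite_Iio N)
    intro n hn
    by_contra h
    exact hN n (le_of_not_gt (fun hlt => h hlt)) hn
  rw [← MeasureTheory.ae_all_iff] at hk
  filter_upwards [hk] with ω hω t
  obtain ⟨k, hkt⟩ := exists_nat_ge t
  exact (hω k).subset fun n hn => le_trans hn hkt

lemma rS_strictMono (ω : Ω) (hp : ∀ n, 0 < X n ω) : StrictMono (fun n => rS X n ω) := by
  apply strictMono_nat_of_lt_succ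
  intro n
  simp only [rS, Finset.sum_range_succ]
  linarith [hp n]

lemma rN_spec (ω : Ω) (hp : ∀ n, 0 < X n ω) (t : ℝ) (ht : 0 ≤ t)
    (hfin : {n | rS X n ω ≤ t}.Finite) :
    (∀ n, n ≤ rN X t ω ↔ rS X n ω ≤ t) ∧ t < rS X (rN X t ω + 1) ω := by
  have hmono := rS_strictMono X ω hp
  have h0 : 0 ∈ {n | rS X n ω ≤ t} := by simp [rS, ht]
  have hne : {n | rS X n ω ≤ t}.Nonempty := ⟨0, h0⟩
  have hbdd : BddAbove {n | rS X n ω ≤ t} := hfin.bddAbove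
  have hmem : rN X t ω ∈ {n | rS X n ω ≤ t} := Nat.sSup_mem hne hbdd
  constructor
  · intro n
    constructor
    · intro hn
      exact le_trans (hmono.monotone hn) hmem
    · intro hn
      exact le_csSup hbdd hn
  · by_contra h
    push_neg at h
    have : rN X t ω + 1 ≤ rN X t ω := le_csSup hbdd h
    omega

lemma tau_pos (hmeas : ∀ n, Measurable fun ω => (X n ω, R n ω)) (hpos : ∀ n ω, 0 < X n ω)
    (hXint : Integrable (X 0) μ) : 0 < ∫ ω, X 0 ω ∂μ := by
  rw [integral_pos_iff_support_of_nonneg (fun ω => (hpos 0 ω).le) hXint]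
  have : Function.support (X 0) = Set.univ := by
    ext ω; simp [Function.mem_support, (hpos 0 ω).ne']
  rw [this]
  simpa using (IsProbabilityMeasure.ne_zero μ)

lemma wald_eq (hmeas : ∀ n, Measurable fun ω => (X n ω, R n ω))
    (hindep : iIndepFun (fun n ω => (X n ω, R n ω)) μ)
    (hident : ∀ n, IdentDistrib (fun ω => (X n ω, R n ω)) (fun ω => (X 0 ω, R 0 ω)) μ μ)
    (hpos : ∀ n ω, 0 < X n ω) (hXint : Integrable (X 0) μ) (t : ℝ) :
    ∫⁻ ω, ∑' n, ENNReal.ofReal (X n ω * ({ω' | rS X n ω' ≤ t}).indicator (fun _ => (1:ℝ)) ω) ∂μ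
      = ENNReal.ofReal ((∫ ω, X 0 ω ∂μ) * rm μ X t) := by
  have hmS : ∀ n, MeasurableSet {ω | rS X n ω ≤ t} :=
    fun n => measurableSet_le (measurable_rS X R hmeas n) measurable_const
  have hXm : ∀ n, Measurable (X n) := fun n => measurable_fst.comp (hmeas n)
  have haem : ∀ n, AEMeasurable
      (fun ω => ENNReal.ofReal (X n ω * ({ω' | rS X n ω' ≤ t}).indicator (fun _ => (1:ℝ)) ω)) μ :=
    fun n => (((hXm n).mul ((measurable_const (a := (1:ℝ))).indicator (hmS n))).ennreal_ofReal).aemeasurable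
  rw [lintegral_tsum haem]
  have hint : ∀ n, Integrable
      (fun ω => X n ω * ({ω' | rS X n ω' ≤ t}).indicator (fun _ => (1:ℝ)) ω) μ := by
    intro n
    have : (fun ω => X n ω * ({ω' | rS X n ω' ≤ t}).indicator (fun _ => (1:ℝ)) ω)
        = ({ω | rS X n ω ≤ t}).indicator (X n) := by
      funext ω
      by_cases h : ω ∈ {ω' | rS X n ω' ≤ t} <;> simp [Set.indicator_apply, h]
    rw [this]
    exact (((hident n).comp measurable_fst).integrable_iff.2 hXint).indicator (hmS n)
  have hlint : ∀ n, ∫⁻ ω, ENNReal.ofReal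
      (X n ω * ({ω' | rS X n ω' ≤ t}).indicator (fun _ => (1:ℝ)) ω) ∂μ
      = ENNReal.ofReal ((∫ ω, X 0 ω ∂μ) * (μ {ω | rS X n ω ≤ t}).toReal) := by
    intro n
    rw [← MeasureTheory.ofReal_integral_eq_lintegral_ofReal (hint n)]
    · rw [factor μ X R hmeas hindep hident measurable_fst hXint n t]
    · filter_upwards with ω
      by_cases h : ω ∈ {ω' | rS X n ω' ≤ t} <;>
        simp [Set.indicator_apply, h, (hpos n ω).le]
  simp_rw [hlint]
  rw [← ENNReal.ofReal_tsum_of_nonneg]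
  · rw [rm, tsum_mul_left]
  · intro n
    have := tau_pos μ X R hmeas hpos hXint
    exact mul_nonneg this.le ENNReal.toReal_nonneg
  · exact (summable_meas_rS μ X R hmeas hindep hident hpos t).mul_left _

lemma rm_lower (hmeas : ∀ n, Measurable fun ω => (X n ω, R n ω))
    (hindep : iIndepFun (fun n ω => (X n ω, R n ω)) μ)
    (hident : ∀ n, IdentDistrib (fun ω => (X n ω, R n ω)) (fun ω => (X 0 ω, R 0 ω)) μ μ)
    (hpos : ∀ n ω, 0 < X n ω) (hXint : Integrable (X 0) μ) (t : ℝ) (ht : 0 ≤ t) :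
    t ≤ (∫ ω, X 0 ω ∂μ) * rm μ X t := by
  have hae := ae_finite_rS μ X R hmeas hindep hident hpos
  have hptw : ∀ᵐ ω ∂μ, ENNReal.ofReal t ≤ ∑' n,
      ENNReal.ofReal (X n ω * ({ω' | rS X n ω' ≤ t}).indicator (fun _ => (1:ℝ)) ω) := by
    filter_upwards [hae] with ω hω
    set N := rN X t ω with hN
    obtain ⟨hiff, hgt⟩ := rN_spec X ω (fun n => hpos n ω) t ht (hω t)
    calc ENNReal.ofReal t ≤ ENNReal.ofReal (rS X (N+1) ω) := ENNReal.ofReal_le_ofReal hgt.le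
      _ = ∑ n ∈ Finset.range (N+1),
          ENNReal.ofReal (X n ω * ({ω' | rS X n ω' ≤ t}).indicator (fun _ => (1:ℝ)) ω) := by
          rw [rS, ENNReal.ofReal_sum_of_nonneg (fun i _ => (hpos i ω).le)]
          apply Finset.sum_congr rfl
          intro n hn
          have hnN : n ≤ N := by
            rw [Finset.mem_range] at hn; omega
          have : ω ∈ {ω' | rS X n ω' ≤ t} := (hiff n).1 hnN
          simp [Set.indicator_apply, this]
      _ ≤ _ := ENNReal.sum_le_tsum _
  have h1 : ENNReal.ofReal t ≤ ENNReal.ofReal ((∫ ω, X 0 ω ∂μ) * rm μ X t) := by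
    rw [← wald_eq μ X R hmeas hindep hident hpos hXint t]
    calc ENNReal.ofReal t = ∫⁻ _, ENNReal.ofReal t ∂μ := by simp
      _ ≤ _ := lintegral_mono_ae hptw
  rcases ENNReal.ofReal_le_ofReal_iff'.1 h1 with h | h
  · exact h
  · have hτ := tau_pos μ X R hmeas hpos hXint
    have hrm : 0 ≤ rm μ X t := tsum_nonneg fun n => ENNReal.toReal_nonneg
    nlinarith

lemma rm_upper (hmeas : ∀ n, Measurable fun ω => (X n ω, R n ω))
    (hindep : iIndepFun (fun n ω => (X n ω, R n ω)) μ)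
    (hident : ∀ n, IdentDistrib (fun ω => (X n ω, R n ω)) (fun ω => (X 0 ω, R 0 ω)) μ μ)
    (hpos : ∀ n ω, 0 < X n ω) (hXint : Integrable (X 0) μ)
    (b : ℝ) (hb : ∀ n ω, X n ω ≤ b) (t : ℝ) (ht : 0 ≤ t) :
    (∫ ω, X 0 ω ∂μ) * rm μ X t ≤ t + b := by
  have hae := ae_finite_rS μ X R hmeas hindep hident hpos
  have hptw : ∀ᵐ ω ∂μ, (∑' n,
      ENNReal.ofReal (X n ω * ({ω' | rS X n ω' ≤ t}).indicator (fun _ => (1:ℝ)) ω))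
      ≤ ENNReal.ofReal (t + b) := by
    filter_upwards [hae] with ω hω
    set N := rN X t ω with hN
    obtain ⟨hiff, hgt⟩ := rN_spec X ω (fun n => hpos n ω) t ht (hω t)
    have htsum : (∑' n,
        ENNReal.ofReal (X n ω * ({ω' | rS X n ω' ≤ t}).indicator (fun _ => (1:ℝ)) ω))
        = ∑ n ∈ Finset.range (N+1),
          ENNReal.ofReal (X n ω * ({ω' | rS X n ω' ≤ t}).indicator (fun _ => (1:ℝ)) ω) := by
      apply tsum_eq_sum
      intro n hn
      have hnN : ¬ (n ≤ N) := by
        rw [Finset.mem_range] at hn; omega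
      have : ¬ (ω ∈ {ω' | rS X n ω' ≤ t}) := fun h => hnN ((hiff n).2 h)
      simp [Set.indicator_apply, this]
    rw [htsum]
    have hsum : ∑ n ∈ Finset.range (N+1),
        ENNReal.ofReal (X n ω * ({ω' | rS X n ω' ≤ t}).indicator (fun _ => (1:ℝ)) ω)
        ≤ ENNReal.ofReal (rS X (N+1) ω) := by
      rw [rS, ENNReal.ofReal_sum_of_nonneg (fun i _ => (hpos i ω).le)]
      apply Finset.sum_le_sum
      intro n _
      apply ENNReal.ofReal_le_ofReal
      by_cases h : ω ∈ {ω' | rS X n ω' ≤ t} <;>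
        simp [Set.indicator_apply, h, (hpos n ω).le]
    refine le_trans hsum (ENNReal.ofReal_le_ofReal ?_)
    have hSN : rS X N ω ≤ t := (hiff N).1 le_rfl
    have : rS X (N+1) ω = rS X N ω + X N ω := by
      rw [rS, rS, Finset.sum_range_succ]
    rw [this]
    linarith [hb N ω]
  have h1 : ENNReal.ofReal ((∫ ω, X 0 ω ∂μ) * rm μ X t) ≤ ENNReal.ofReal (t + b) := by
    rw [← wald_eq μ X R hmeas hindep hident hpos hXint t]
    calc (∫⁻ ω, ∑' n, ENNReal.ofReal
          (X n ω * ({ω' | rS X n ω' ≤ t}).indicator (fun _ => (1:ℝ)) ω) ∂μ)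
        ≤ ∫⁻ _, ENNReal.ofReal (t + b) ∂μ := lintegral_mono_ae hptw
      _ = ENNReal.ofReal (t + b) := by simp
  rcases ENNReal.ofReal_le_ofReal_iff'.1 h1 with h | h
  · exact h
  · exfalso
    have hτ := tau_pos μ X R hmeas hpos hXint
    have hrm : (1:ℝ) ≤ rm μ X t := by
      have h0 : (μ {ω | rS X 0 ω ≤ t}).toReal = 1 := by
        have : {ω | rS X 0 ω ≤ t} = Set.univ := by
          ext ω; simp [rS, ht]
        rw [this]; simp
      rw [← h0]
      exact Summable.le_tsum (summable_meas_rS μ X R hmeas hindep hident hpos t) 0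
        (fun n _ => ENNReal.toReal_nonneg)
    nlinarith

lemma trunc_hyps (hmeas : ∀ n, Measurable fun ω => (X n ω, R n ω))
    (hindep : iIndepFun (fun n ω => (X n ω, R n ω)) μ)
    (hident : ∀ n, IdentDistrib (fun ω => (X n ω, R n ω)) (fun ω => (X 0 ω, R 0 ω)) μ μ)
    (hpos : ∀ n ω, 0 < X n ω) (hXint : Integrable (X 0) μ) (b : ℝ) (hb : 0 < b) :
    (∀ n, Measurable fun ω => (min (X n ω) b, R n ω)) ∧
    (iIndepFun (fun n ω => (min (X n ω) b, R n ω)) μ) ∧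
    (∀ n, IdentDistrib (fun ω => (min (X n ω) b, R n ω)) (fun ω => (min (X 0 ω) b, R 0 ω)) μ μ) ∧
    (∀ n ω, 0 < min (X n ω) b) ∧ Integrable (fun ω => min (X 0 ω) b) μ := by
  have hg : Measurable (fun p : ℝ × ℝ => (min p.1 b, p.2)) :=
    (measurable_fst.min measurable_const).prodMk measurable_snd
  refine ⟨fun n => hg.comp (hmeas n), ?_, fun n => (hident n).comp hg,
    fun n ω => lt_min (hpos n ω) hb, ?_⟩
  · exact hindep.comp (fun _ => fun p : ℝ × ℝ => (min p.1 b, p.2)) (fun _ => hg)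
  · refine hXint.mono ((measurable_fst.comp (hmeas 0)).min measurable_const).aestronglyMeasurable ?_
    filter_upwards with ω
    rw [Real.norm_eq_abs, Real.norm_eq_abs, abs_of_pos (lt_min (hpos 0 ω) hb),
      abs_of_pos (hpos 0 ω)]
    exact min_le_left _ _

lemma rm_le_rm_trunc (hmeas : ∀ n, Measurable fun ω => (X n ω, R n ω))
    (hindep : iIndepFun (fun n ω => (X n ω, R n ω)) μ)
    (hident : ∀ n, IdentDistrib (fun ω => (X n ω, R n ω)) (fun ω => (X 0 ω, R 0 ω)) μ μ)
    (hpos : ∀ n ω, 0 < X n ω) (hXint : Integrable (X 0) μ) (b : ℝ) (hb : 0 < b) (t : ℝ) :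
    rm μ X t ≤ rm μ (fun n ω => min (X n ω) b) t := by
  obtain ⟨h1, h2, h3, h4, h5⟩ := trunc_hyps μ X R hmeas hindep hident hpos hXint b hb
  apply Summable.tsum_le_tsum _ (summable_meas_rS μ X R hmeas hindep hident hpos t)
    (summable_meas_rS μ _ R h1 h2 h3 h4 t)
  intro n
  apply ENNReal.toReal_mono (measure_ne_top μ _)
  apply measure_mono
  intro ω hω
  calc rS (fun n ω => min (X n ω) b) n ω ≤ rS X n ω :=
        Finset.sum_le_sum fun i _ => min_le_left _ _
    _ ≤ t := hω

lemma tau_trunc_tendsto (hmeas : ∀ n, Measurable fun ω => (X n ω, R n ω))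
    (hXint : Integrable (X 0) μ) :
    Tendsto (fun b : ℕ => ∫ ω, min (X 0 ω) (b:ℝ) ∂μ) atTop (nhds (∫ ω, X 0 ω ∂μ)) := by
  apply MeasureTheory.integral_tendsto_of_tendsto_of_monotone
  · intro b
    refine hXint.mono ((measurable_fst.comp (hmeas 0)).min measurable_const).aestronglyMeasurable ?_
    filter_upwards with ω
    rw [Real.norm_eq_abs, Real.norm_eq_abs]
    rcases le_or_gt (X 0 ω) b with h | h
    · rw [min_eq_left h]
    · rw [min_eq_right h.le]
      rw [abs_of_nonneg (by positivity : (0:ℝ) ≤ (b:ℝ))]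
      exact le_abs.2 (Or.inl h.le)
  · exact hXint
  · filter_upwards with ω
    intro i j hij
    exact min_le_min le_rfl (Nat.cast_le.2 hij)
  · filter_upwards with ω
    obtain ⟨k, hk⟩ := exists_nat_ge (X 0 ω)
    apply tendsto_atTop_of_eventually_const (i₀ := k)
    intro i hi
    exact min_eq_left (le_trans hk (Nat.cast_le.2 hi))

/-- Elementary renewal theorem for the renewal function. -/
lemma rm_div_tendsto (hmeas : ∀ n, Measurable fun ω => (X n ω, R n ω))
    (hindep : iIndepFun (fun n ω => (X n ω, R n ω)) μ)
    (hident : ∀ n, IdentDistrib (fun ω => (X n ω, R n ω)) (fun ω => (X 0 ω, R 0 ω)) μ μ)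
    (hpos : ∀ n ω, 0 < X n ω) (hXint : Integrable (X 0) μ) :
    Tendsto (fun t => rm μ X t / t) atTop (nhds (1 / (∫ ω, X 0 ω ∂μ))) := by
  set τ := ∫ ω, X 0 ω ∂μ with hτdef
  have hτ : 0 < τ := tau_pos μ X R hmeas hpos hXint
  rw [Metric.tendsto_atTop]
  intro ε hε
  -- choose truncation level
  have htendsto : Tendsto (fun b : ℕ => 1 / (∫ ω, min (X 0 ω) (b:ℝ) ∂μ)) atTop (nhds (1/τ)) :=
    (tendsto_const_nhds.div (tau_trunc_tendsto μ X R hmeas hXint) hτ.ne')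
  have hev : ∀ᶠ b : ℕ in atTop, 1 / (∫ ω, min (X 0 ω) (b:ℝ) ∂μ) < 1/τ + ε/2 := by
    apply htendsto.eventually_lt_const
    linarith
  obtain ⟨b, hb1, hble⟩ : ∃ b : ℕ, 1 ≤ b ∧ 1 / (∫ ω, min (X 0 ω) (b:ℝ) ∂μ) < 1/τ + ε/2 := by
    obtain ⟨b, hb⟩ := (hev.and (eventually_ge_atTop 1)).exists
    exact ⟨b, hb.2, hb.1⟩
  have hbpos : (0:ℝ) < b := by exact_mod_cast hb1
  obtain ⟨h1, h2, h3, h4, h5⟩ := trunc_hyps μ X R hmeas hindep hident hpos hXint b hbpos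
  set τb := ∫ ω, min (X 0 ω) (b:ℝ) ∂μ with hτbdef
  have hτb : 0 < τb := tau_pos μ _ R h1 h4 h5
  -- choose T
  refine ⟨max 1 (2 * b / (τb * ε)), fun t ht => ?_⟩
  have ht1 : (1:ℝ) ≤ t := le_trans (le_max_left _ _) ht
  have ht0 : (0:ℝ) < t := by linarith
  have hlow : 1/τ ≤ rm μ X t / t := by
    have := rm_lower μ X R hmeas hindep hident hpos hXint t (by linarith)
    rw [div_le_div_iff₀ hτ ht0]
    nlinarith [this]
  have hup : rm μ X t / t < 1/τ + ε := by
    have hub := rm_upper μ _ R h1 h2 h3 h4 h5 b (fun n ω => min_le_right _ _) t (by linarith)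
    have hcomp := rm_le_rm_trunc μ X R hmeas hindep hident hpos hXint b hbpos t
    have h6 : rm μ X t ≤ (t + b) / τb := by
      rw [le_div_iff₀ hτb]
      nlinarith
    have h6' : rm μ X t * τb ≤ t + b := by nlinarith [hub, hcomp, hτb]
    have h7 : rm μ X t / t ≤ (t + b) / (τb * t) := by
      rw [div_le_div_iff₀ ht0 (by positivity)]
      nlinarith [mul_le_mul_of_nonneg_right h6' ht0.le]
    have h8 : (t + b) / (τb * t) = 1/τb + b / (τb * t) := by
      field_simp
    have h9 : b / (τb * t) ≤ ε / 2 := by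
      have htb : 2 * b / (τb * ε) ≤ t := le_trans (le_max_right _ _) ht
      rw [div_le_iff₀ (by positivity)]
      rw [div_le_iff₀ (by positivity)] at htb
      nlinarith
    calc rm μ X t / t ≤ 1/τb + b / (τb * t) := by rw [← h8]; exact h7
      _ ≤ 1/τb + ε/2 := by linarith
      _ < 1/τ + ε/2 + ε/2 := by linarith
      _ = 1/τ + ε := by ring
  rw [Real.dist_eq, abs_lt]
  constructor <;> linarith

/-- Tail reward function `q(u) = E[|R₁| 1_{X₁ > u}]`. -/
noncomputable def rq (μ : Measure Ω) (X R : ℕ → Ω → ℝ) (u : ℝ) : ℝ :=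
  ∫ ω, |R 0 ω| * (Set.Ioi u).indicator (fun _ => (1:ℝ)) (X 0 ω) ∂μ

lemma rq_phi_meas (u : ℝ) :
    Measurable (fun p : ℝ × ℝ => |p.2| * (Set.Ioi u).indicator (fun _ => (1:ℝ)) p.1) :=
  (measurable_snd.abs).mul
    (((measurable_const (a := (1:ℝ))).indicator measurableSet_Ioi).comp measurable_fst)

lemma rq_phi_int (hmeas : ∀ n, Measurable fun ω => (X n ω, R n ω))
    (hRint : Integrable (R 0) μ) (u : ℝ) :
    Integrable (fun ω => |R 0 ω| * (Set.Ioi u).indicator (fun _ => (1:ℝ)) (X 0 ω)) μ := by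
  refine hRint.abs.mono' (((rq_phi_meas u).comp (hmeas 0)).aestronglyMeasurable) ?_
  filter_upwards with ω
  rw [Real.norm_eq_abs]
  by_cases h : X 0 ω ∈ Set.Ioi u <;>
    simp [Set.indicator_apply, h, abs_abs, abs_nonneg]

lemma rq_nonneg (u : ℝ) : 0 ≤ rq μ X R u := by
  apply integral_nonneg
  intro ω
  by_cases h : X 0 ω ∈ Set.Ioi u <;>
    simp [Set.indicator_apply, h, abs_nonneg]

lemma rq_le (hmeas : ∀ n, Measurable fun ω => (X n ω, R n ω))
    (hRint : Integrable (R 0) μ) (u : ℝ) : rq μ X R u ≤ ∫ ω, |R 0 ω| ∂μ := by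
  apply integral_mono (rq_phi_int μ X R hmeas hRint u) hRint.abs
  intro ω
  by_cases h : X 0 ω ∈ Set.Ioi u <;>
    simp [Set.indicator_apply, h, abs_nonneg]

lemma rq_tendsto (hmeas : ∀ n, Measurable fun ω => (X n ω, R n ω))
    (hRint : Integrable (R 0) μ) :
    Tendsto (rq μ X R) atTop (nhds 0) := by
  have : (0:ℝ) = ∫ ω, (0:ℝ) ∂μ := by simp
  rw [this]
  apply tendsto_integral_filter_of_dominated_convergence (fun ω => |R 0 ω|)
  · filter_upwards with u
    exact (((rq_phi_meas u).comp (hmeas 0)).aestronglyMeasurable)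
  · filter_upwards with u
    filter_upwards with ω
    rw [Real.norm_eq_abs]
    by_cases h : X 0 ω ∈ Set.Ioi u <;>
      simp [Set.indicator_apply, h, abs_abs, abs_nonneg]
  · exact hRint.abs
  · filter_upwards with ω
    have : ∀ᶠ u in atTop, |R 0 ω| * (Set.Ioi u).indicator (fun _ => (1:ℝ)) (X 0 ω) = 0 := by
      filter_upwards [eventually_ge_atTop (X 0 ω)] with u hu
      have : X 0 ω ∉ Set.Ioi u := by simp [hu]
      simp [Set.indicator_apply, this]
    exact Tendsto.congr' (this.mono fun u hu => hu.symm) tendsto_const_nhds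

lemma integrable_Rn_ind (hmeas : ∀ n, Measurable fun ω => (X n ω, R n ω))
    (hident : ∀ n, IdentDistrib (fun ω => (X n ω, R n ω)) (fun ω => (X 0 ω, R 0 ω)) μ μ)
    (hRint : Integrable (R 0) μ) (n m : ℕ) (t : ℝ) :
    Integrable (fun ω => R n ω * ({ω' | rS X m ω' ≤ t}).indicator (fun _ => (1:ℝ)) ω) μ := by
  have hmS : MeasurableSet {ω | rS X m ω ≤ t} :=
    measurableSet_le (measurable_rS X R hmeas m) measurable_const
  have : (fun ω => R n ω * ({ω' | rS X m ω' ≤ t}).indicator (fun _ => (1:ℝ)) ω)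
      = ({ω | rS X m ω ≤ t}).indicator (R n) := by
    funext ω
    by_cases h : ω ∈ {ω' | rS X m ω' ≤ t} <;> simp [Set.indicator_apply, h]
  rw [this]
  exact (((hident n).comp measurable_snd).integrable_iff.2 hRint).indicator hmS

lemma norm_int_Rn_ind_le (hmeas : ∀ n, Measurable fun ω => (X n ω, R n ω))
    (hindep : iIndepFun (fun n ω => (X n ω, R n ω)) μ)
    (hident : ∀ n, IdentDistrib (fun ω => (X n ω, R n ω)) (fun ω => (X 0 ω, R 0 ω)) μ μ)
    (hpos : ∀ n ω, 0 < X n ω) (hRint : Integrable (R 0) μ) (n : ℕ) (t : ℝ) :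
    ∫ ω, ‖R n ω * ({ω' | rS X (n+1) ω' ≤ t}).indicator (fun _ => (1:ℝ)) ω‖ ∂μ
      ≤ (∫ ω, |R 0 ω| ∂μ) * (μ {ω | rS X n ω ≤ t}).toReal := by
  have habs : Integrable (fun ω => |R n ω| * ({ω' | rS X n ω' ≤ t}).indicator (fun _ => (1:ℝ)) ω) μ := by
    have := (integrable_Rn_ind μ X R hmeas hident hRint n n t).abs
    refine this.congr ?_
    filter_upwards with ω
    by_cases h : ω ∈ {ω' | rS X n ω' ≤ t} <;> simp [Set.indicator_apply, h, abs_mul]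
  have hle : ∀ ω, ‖R n ω * ({ω' | rS X (n+1) ω' ≤ t}).indicator (fun _ => (1:ℝ)) ω‖
      ≤ |R n ω| * ({ω' | rS X n ω' ≤ t}).indicator (fun _ => (1:ℝ)) ω := by
    intro ω
    rw [Real.norm_eq_abs, abs_mul]
    have hsub : rS X (n+1) ω ≤ t → rS X n ω ≤ t := by
      intro h
      have : rS X n ω ≤ rS X (n+1) ω := (rS_strictMono X ω (fun k => hpos k ω)).monotone (by omega)
      linarith
    by_cases h1 : ω ∈ {ω' | rS X (n+1) ω' ≤ t}
    · have h2 : ω ∈ {ω' | rS X n ω' ≤ t} := hsub h1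
      simp [Set.indicator_apply, h1, h2]
    · by_cases h2 : ω ∈ {ω' | rS X n ω' ≤ t} <;>
        simp [Set.indicator_apply, h1, h2, abs_nonneg]
  calc ∫ ω, ‖R n ω * ({ω' | rS X (n+1) ω' ≤ t}).indicator (fun _ => (1:ℝ)) ω‖ ∂μ
      ≤ ∫ ω, |R n ω| * ({ω' | rS X n ω' ≤ t}).indicator (fun _ => (1:ℝ)) ω ∂μ :=
        integral_mono (integrable_Rn_ind μ X R hmeas hident hRint n (n+1) t).norm habs hle
    _ = (∫ ω, |R 0 ω| ∂μ) * (μ {ω | rS X n ω ≤ t}).toReal := by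
        have := factor μ X R hmeas hindep hident (φ := fun p => |p.2|)
          measurable_snd.abs hRint.abs n t
        exact this

/-- The expected reward as a sum. -/
lemma ER_eq (hmeas : ∀ n, Measurable fun ω => (X n ω, R n ω))
    (hindep : iIndepFun (fun n ω => (X n ω, R n ω)) μ)
    (hident : ∀ n, IdentDistrib (fun ω => (X n ω, R n ω)) (fun ω => (X 0 ω, R 0 ω)) μ μ)
    (hpos : ∀ n ω, 0 < X n ω) (hRint : Integrable (R 0) μ) (t : ℝ) (ht : 0 ≤ t) :
    (∫ ω, (∑ n ∈ Finset.range (rN X t ω), R n ω) ∂μ)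
      = ∑' n, ∫ ω, R n ω * ({ω' | rS X (n+1) ω' ≤ t}).indicator (fun _ => (1:ℝ)) ω ∂μ := by
  set f : ℕ → Ω → ℝ :=
    fun n ω => R n ω * ({ω' | rS X (n+1) ω' ≤ t}).indicator (fun _ => (1:ℝ)) ω with hf
  have hsummable : Summable (fun n => ∫ ω, ‖f n ω‖ ∂μ) := by
    refine Summable.of_nonneg_of_le (fun n => integral_nonneg fun ω => norm_nonneg _)
      (fun n => norm_int_Rn_ind_le μ X R hmeas hindep hident hpos hRint n t) ?_
    exact (summable_meas_rS μ X R hmeas hindep hident hpos t).mul_left _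
  have hint : ∀ n, Integrable (f n) μ :=
    fun n => integrable_Rn_ind μ X R hmeas hident hRint n (n+1) t
  have hae : ∀ᵐ ω ∂μ, (∑ n ∈ Finset.range (rN X t ω), R n ω) = ∑' n, f n ω := by
    filter_upwards [ae_finite_rS μ X R hmeas hindep hident hpos] with ω hω
    obtain ⟨hiff, hgt⟩ := rN_spec X ω (fun n => hpos n ω) t ht (hω t)
    have hzero : ∀ n ∉ Finset.range (rN X t ω), f n ω = 0 := by
      intro n hn
      rw [Finset.mem_range] at hn
      have hmem : ¬ (ω ∈ {ω' | rS X (n+1) ω' ≤ t}) := by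
        intro hmem
        exact hn ((hiff (n+1)).2 hmem)
      show R n ω * _ = 0
      rw [Set.indicator_of_notMem hmem, mul_zero]
    rw [tsum_eq_sum hzero]
    apply Finset.sum_congr rfl
    intro n hn
    rw [Finset.mem_range] at hn
    have hm : ω ∈ {ω' | rS X (n+1) ω' ≤ t} := (hiff (n+1)).1 (by omega)
    show R n ω = R n ω * _
    rw [Set.indicator_of_mem hm, mul_one]
  rw [integral_congr_ae hae]
  exact (integral_tsum_of_summable_integral_norm hint hsummable).symm

lemma integrable_absRn_ind (hmeas : ∀ n, Measurable fun ω => (X n ω, R n ω))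
    (hident : ∀ n, IdentDistrib (fun ω => (X n ω, R n ω)) (fun ω => (X 0 ω, R 0 ω)) μ μ)
    (hRint : Integrable (R 0) μ) (n m : ℕ) (t : ℝ) :
    Integrable (fun ω => |R n ω| * ({ω' | rS X m ω' ≤ t}).indicator (fun _ => (1:ℝ)) ω) μ := by
  refine (integrable_Rn_ind μ X R hmeas hident hRint n m t).abs.congr ?_
  filter_upwards with ω
  by_cases h : ω ∈ {ω' | rS X m ω' ≤ t} <;> simp [Set.indicator_apply, h, abs_mul]

lemma term_bound (hmeas : ∀ n, Measurable fun ω => (X n ω, R n ω))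
    (hindep : iIndepFun (fun n ω => (X n ω, R n ω)) μ)
    (hident : ∀ n, IdentDistrib (fun ω => (X n ω, R n ω)) (fun ω => (X 0 ω, R 0 ω)) μ μ)
    (hpos : ∀ n ω, 0 < X n ω) (hRint : Integrable (R 0) μ)
    (t ε : ℝ) (ht : 0 ≤ t) (hε : 0 ≤ ε) (hε1 : ε ≤ 1) (n : ℕ) :
    |(∫ ω, R n ω * ({ω' | rS X (n+1) ω' ≤ t}).indicator (fun _ => (1:ℝ)) ω ∂μ)
      - (∫ ω, R 0 ω ∂μ) * (μ {ω | rS X n ω ≤ t}).toReal|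
    ≤ rq μ X R (ε*t) * (μ {ω | rS X n ω ≤ (1-ε)*t}).toReal
      + (∫ ω, |R 0 ω| ∂μ) * ((μ {ω | rS X n ω ≤ t}).toReal
        - (μ {ω | rS X n ω ≤ (1-ε)*t}).toReal) := by
  have hSmono : ∀ ω, rS X n ω ≤ rS X (n+1) ω :=
    fun ω => (rS_strictMono X ω (fun k => hpos k ω)).monotone (by omega)
  have h1εt : (1-ε)*t ≤ t := by nlinarith
  -- rewrite the second term using factor
  rw [← factor μ X R hmeas hindep hident measurable_snd hRint n t]
  -- the difference of integrals
  have hintA := integrable_Rn_ind μ X R hmeas hident hRint n (n+1) t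
  have hintB := integrable_Rn_ind μ X R hmeas hident hRint n n t
  rw [← integral_sub hintA hintB]
  set A := {ω' | rS X (n+1) ω' ≤ t} with hA
  set B := {ω' | rS X n ω' ≤ t} with hB
  set C := {ω' | rS X n ω' ≤ (1-ε)*t} with hC
  set h1 : Ω → ℝ := fun ω =>
    (|R n ω| * (Set.Ioi (ε*t)).indicator (fun _ => (1:ℝ)) (X n ω))
      * C.indicator (fun _ => (1:ℝ)) ω with hh1
  set h2 : Ω → ℝ := fun ω => |R n ω| * B.indicator (fun _ => (1:ℝ)) ω with hh2
  set h3 : Ω → ℝ := fun ω => |R n ω| * C.indicator (fun _ => (1:ℝ)) ω with hh3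
  have hint1 : Integrable h1 μ := by
    have hφn : Integrable (fun ω =>
        |R n ω| * (Set.Ioi (ε*t)).indicator (fun _ => (1:ℝ)) (X n ω)) μ :=
      ((hident n).comp (rq_phi_meas (ε*t))).integrable_iff.2 (rq_phi_int μ X R hmeas hRint (ε*t))
    have hmC : MeasurableSet C := measurableSet_le (measurable_rS X R hmeas n) measurable_const
    refine (hφn.indicator hmC).congr ?_
    filter_upwards with ω
    by_cases h : ω ∈ C <;> simp [Set.indicator_apply, h, hh1]
  have hint2 : Integrable h2 μ := integrable_absRn_ind μ X R hmeas hident hRint n n t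
  have hint3 : Integrable h3 μ := integrable_absRn_ind μ X R hmeas hident hRint n n ((1-ε)*t)
  have habs : |∫ ω, (R n ω * A.indicator (fun _ => (1:ℝ)) ω
        - R n ω * B.indicator (fun _ => (1:ℝ)) ω) ∂μ|
      ≤ ∫ ω, ‖R n ω * A.indicator (fun _ => (1:ℝ)) ω
        - R n ω * B.indicator (fun _ => (1:ℝ)) ω‖ ∂μ := by
    rw [← Real.norm_eq_abs]
    exact norm_integral_le_integral_norm _
  refine le_trans habs ?_
  have hptw : ∀ ω, ‖R n ω * A.indicator (fun _ => (1:ℝ)) ω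
      - R n ω * B.indicator (fun _ => (1:ℝ)) ω‖ ≤ h1 ω + (h2 ω - h3 ω) := by
    intro ω
    have hS : rS X (n+1) ω = rS X n ω + X n ω := by
      rw [rS, rS, Finset.sum_range_succ]
    have hAB : ω ∈ A → ω ∈ B := fun h => by
      simp only [hA, Set.mem_setOf_eq] at h
      simp only [hB, Set.mem_setOf_eq]
      linarith [hSmono ω]
    have hCB : ω ∈ C → ω ∈ B := fun h => by
      simp only [hC, Set.mem_setOf_eq] at h
      simp only [hB, Set.mem_setOf_eq]
      linarith
    have h1nn : 0 ≤ h1 ω :=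
      mul_nonneg (mul_nonneg (abs_nonneg _)
        (Set.indicator_nonneg (fun _ _ => zero_le_one) _))
        (Set.indicator_nonneg (fun _ _ => zero_le_one) _)
    have hCBind : C.indicator (fun _ => (1:ℝ)) ω ≤ B.indicator (fun _ => (1:ℝ)) ω := by
      by_cases h : ω ∈ C
      · rw [Set.indicator_of_mem h, Set.indicator_of_mem (hCB h)]
      · rw [Set.indicator_of_notMem h]
        exact Set.indicator_nonneg (fun _ _ => zero_le_one) _
    have h32 : h3 ω ≤ h2 ω := mul_le_mul_of_nonneg_left hCBind (abs_nonneg _)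
    by_cases hmA : ω ∈ A
    · have hmB := hAB hmA
      rw [Set.indicator_of_mem hmA, Set.indicator_of_mem hmB]
      simp only [mul_one, sub_self, norm_zero]
      linarith
    · by_cases hmB : ω ∈ B
      · rw [Set.indicator_of_notMem hmA, Set.indicator_of_mem hmB]
        simp only [mul_zero, mul_one, zero_sub, norm_neg, Real.norm_eq_abs]
        by_cases hmC : ω ∈ C
        · have hX : X n ω ∈ Set.Ioi (ε*t) := by
            simp only [hA, Set.mem_setOf_eq, not_le] at hmA
            simp only [hC, Set.mem_setOf_eq] at hmC
            simp only [Set.mem_Ioi]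
            nlinarith [hS]
          have e1 : h1 ω = |R n ω| := by
            simp only [hh1, Set.indicator_of_mem hX, Set.indicator_of_mem hmC, mul_one]
          linarith
        · have e3 : h3 ω = 0 := by
            simp only [hh3, Set.indicator_of_notMem hmC, mul_zero]
          have e2 : h2 ω = |R n ω| := by
            simp only [hh2, Set.indicator_of_mem hmB, mul_one]
          linarith
      · have hmC : ω ∉ C := fun h => hmB (hCB h)
        rw [Set.indicator_of_notMem hmA, Set.indicator_of_notMem hmB]
        have e2 : h2 ω = 0 := by
          simp only [hh2, Set.indicator_of_notMem hmB, mul_zero]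
        have e3 : h3 ω = 0 := by
          simp only [hh3, Set.indicator_of_notMem hmC, mul_zero]
        have e1 : h1 ω = 0 := by
          simp only [hh1, Set.indicator_of_notMem hmC, mul_zero]
        simp [e1, e2, e3]
  calc ∫ ω, ‖R n ω * A.indicator (fun _ => (1:ℝ)) ω
        - R n ω * B.indicator (fun _ => (1:ℝ)) ω‖ ∂μ
      ≤ ∫ ω, (h1 ω + (h2 ω - h3 ω)) ∂μ := by
        apply integral_mono (hintA.sub hintB).norm (hint1.add (hint2.sub hint3)) hptw
    _ = (∫ ω, h1 ω ∂μ) + ((∫ ω, h2 ω ∂μ) - (∫ ω, h3 ω ∂μ)) := by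
        rw [integral_add (g := fun ω => h2 ω - h3 ω) hint1 (hint2.sub hint3),
          integral_sub hint2 hint3]
    _ = rq μ X R (ε*t) * (μ {ω | rS X n ω ≤ (1-ε)*t}).toReal
        + (∫ ω, |R 0 ω| ∂μ) * ((μ {ω | rS X n ω ≤ t}).toReal
          - (μ {ω | rS X n ω ≤ (1-ε)*t}).toReal) := by
        have e1 : ∫ ω, h1 ω ∂μ = rq μ X R (ε*t) * (μ {ω | rS X n ω ≤ (1-ε)*t}).toReal := by
          have := factor μ X R hmeas hindep hident (rq_phi_meas (ε*t))
            (rq_phi_int μ X R hmeas hRint (ε*t)) n ((1-ε)*t)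
          exact this
        have e2 : ∫ ω, h2 ω ∂μ = (∫ ω, |R 0 ω| ∂μ) * (μ {ω | rS X n ω ≤ t}).toReal := by
          have := factor μ X R hmeas hindep hident (φ := fun p => |p.2|)
            measurable_snd.abs hRint.abs n t
          exact this
        have e3 : ∫ ω, h3 ω ∂μ = (∫ ω, |R 0 ω| ∂μ) * (μ {ω | rS X n ω ≤ (1-ε)*t}).toReal := by
          have := factor μ X R hmeas hindep hident (φ := fun p => |p.2|)
            measurable_snd.abs hRint.abs n ((1-ε)*t)
          exact this
        rw [e1, e2, e3]
        ring

lemma ER_diff_bound (hmeas : ∀ n, Measurable fun ω => (X n ω, R n ω))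
    (hindep : iIndepFun (fun n ω => (X n ω, R n ω)) μ)
    (hident : ∀ n, IdentDistrib (fun ω => (X n ω, R n ω)) (fun ω => (X 0 ω, R 0 ω)) μ μ)
    (hpos : ∀ n ω, 0 < X n ω) (hRint : Integrable (R 0) μ)
    (t ε : ℝ) (ht : 0 ≤ t) (hε : 0 ≤ ε) (hε1 : ε ≤ 1) :
    |(∫ ω, (∑ n ∈ Finset.range (rN X t ω), R n ω) ∂μ) - (∫ ω, R 0 ω ∂μ) * rm μ X t|
      ≤ rq μ X R (ε*t) * rm μ X ((1-ε)*t)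
        + (∫ ω, |R 0 ω| ∂μ) * (rm μ X t - rm μ X ((1-ε)*t)) := by
  set a : ℕ → ℝ := fun n =>
    ∫ ω, R n ω * ({ω' | rS X (n+1) ω' ≤ t}).indicator (fun _ => (1:ℝ)) ω ∂μ with ha
  set b : ℕ → ℝ := fun n => (∫ ω, R 0 ω ∂μ) * (μ {ω | rS X n ω ≤ t}).toReal with hb
  set D : ℕ → ℝ := fun n => rq μ X R (ε*t) * (μ {ω | rS X n ω ≤ (1-ε)*t}).toReal
    + (∫ ω, |R 0 ω| ∂μ) * ((μ {ω | rS X n ω ≤ t}).toReal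
      - (μ {ω | rS X n ω ≤ (1-ε)*t}).toReal) with hD
  have hsumP : Summable (fun n => (μ {ω | rS X n ω ≤ t}).toReal) :=
    summable_meas_rS μ X R hmeas hindep hident hpos t
  have hsumP' : Summable (fun n => (μ {ω | rS X n ω ≤ (1-ε)*t}).toReal) :=
    summable_meas_rS μ X R hmeas hindep hident hpos ((1-ε)*t)
  have hsuma : Summable a := by
    apply Summable.of_abs
    apply Summable.of_nonneg_of_le (fun n => abs_nonneg _) _ (hsumP.mul_left (∫ ω, |R 0 ω| ∂μ))
    intro n
    calc |a n| ≤ ∫ ω, ‖R n ω * ({ω' | rS X (n+1) ω' ≤ t}).indicator (fun _ => (1:ℝ)) ω‖ ∂μ := by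
          rw [ha, ← Real.norm_eq_abs]
          exact norm_integral_le_integral_norm _
      _ ≤ (∫ ω, |R 0 ω| ∂μ) * (μ {ω | rS X n ω ≤ t}).toReal :=
          norm_int_Rn_ind_le μ X R hmeas hindep hident hpos hRint n t
  have hsumb : Summable b := hsumP.mul_left _
  have hterm : ∀ n, |a n - b n| ≤ D n :=
    fun n => term_bound μ X R hmeas hindep hident hpos hRint t ε ht hε hε1 n
  have hsumD : Summable D :=
    ((hsumP'.mul_left _).add (((hsumP.sub hsumP')).mul_left _))
  have hkey : (∫ ω, (∑ n ∈ Finset.range (rN X t ω), R n ω) ∂μ)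
      - (∫ ω, R 0 ω ∂μ) * rm μ X t = ∑' n, (a n - b n) := by
    rw [ER_eq μ X R hmeas hindep hident hpos hRint t ht]
    rw [Summable.tsum_sub hsuma hsumb]
    congr 1
    rw [hb, rm, ← tsum_mul_left]
  rw [hkey]
  have hsumab : Summable (fun n => a n - b n) := hsuma.sub hsumb
  calc |∑' n, (a n - b n)| ≤ ∑' n, |a n - b n| := by
        rw [← Real.norm_eq_abs]
        refine le_trans (norm_tsum_le_tsum_norm ?_) le_rfl
        exact hsumab.abs
      _ ≤ ∑' n, D n := Summable.tsum_le_tsum hterm hsumab.abs hsumD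
      _ = rq μ X R (ε*t) * rm μ X ((1-ε)*t)
          + (∫ ω, |R 0 ω| ∂μ) * (rm μ X t - rm μ X ((1-ε)*t)) := by
        rw [hD, Summable.tsum_add (hsumP'.mul_left _) ((hsumP.sub hsumP').mul_left _),
          tsum_mul_left, tsum_mul_left, Summable.tsum_sub hsumP hsumP']
        rfl

lemma D_div_tendsto (hmeas : ∀ n, Measurable fun ω => (X n ω, R n ω))
    (hindep : iIndepFun (fun n ω => (X n ω, R n ω)) μ)
    (hident : ∀ n, IdentDistrib (fun ω => (X n ω, R n ω)) (fun ω => (X 0 ω, R 0 ω)) μ μ)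
    (hpos : ∀ n ω, 0 < X n ω) (hXint : Integrable (X 0) μ) (hRint : Integrable (R 0) μ) :
    Tendsto (fun t => ((∫ ω, (∑ n ∈ Finset.range (rN X t ω), R n ω) ∂μ)
      - (∫ ω, R 0 ω ∂μ) * rm μ X t) / t) atTop (nhds 0) := by
  set τ := ∫ ω, X 0 ω ∂μ with hτdef
  set ρR := ∫ ω, |R 0 ω| ∂μ with hρRdef
  have hτ : 0 < τ := tau_pos μ X R hmeas hpos hXint
  have hρR : 0 ≤ ρR := integral_nonneg fun ω => abs_nonneg _
  rw [NormedAddCommGroup.tendsto_nhds_zero]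
  intro δ hδ
  set ε := min (1/2) (δ*τ/(2*(ρR+1))) with hεdef
  have hε0 : 0 < ε := by
    apply lt_min (by norm_num)
    positivity
  have hε1 : ε ≤ 1 := le_trans (min_le_left _ _) (by norm_num)
  have hεsmall : ρR * (ε/τ) < δ/2 := by
    have h1 : ε ≤ δ*τ/(2*(ρR+1)) := min_le_right _ _
    have hq2 : (0:ℝ) < 2*(ρR+1) := by positivity
    have e1 : ε/τ ≤ δ/(2*(ρR+1)) := by
      rw [div_le_div_iff₀ hτ hq2]
      calc ε * (2*(ρR+1)) ≤ (δ*τ/(2*(ρR+1))) * (2*(ρR+1)) := by nlinarith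
        _ = δ * τ := by field_simp
    have e2 : ρR * (ε/τ) ≤ ρR * (δ/(2*(ρR+1))) := mul_le_mul_of_nonneg_left e1 hρR
    have e3 : ρR * (δ/(2*(ρR+1))) < δ/2 := by
      rw [mul_div_assoc'] at *
      rw [div_lt_div_iff₀ hq2 (by norm_num : (0:ℝ) < 2)]
      nlinarith
    linarith
  -- limits
  have hmul : Tendsto (fun t : ℝ => ε * t) atTop atTop :=
    Tendsto.const_mul_atTop hε0 tendsto_id
  have hq : Tendsto (fun t => rq μ X R (ε*t)) atTop (nhds 0) :=
    (rq_tendsto μ X R hmeas hRint).comp hmul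
  have hrm := rm_div_tendsto μ X R hmeas hindep hident hpos hXint
  have hmul2 : Tendsto (fun t : ℝ => (1-ε) * t) atTop atTop :=
    Tendsto.const_mul_atTop (by linarith [hε0, hε1, min_le_left (1/2 : ℝ) (δ*τ/(2*(ρR+1)))] :
      (0:ℝ) < 1 - ε) tendsto_id
  have hε1' : (0:ℝ) < 1 - ε := by
    have : ε ≤ 1/2 := min_le_left _ _
    linarith
  have hrm2 : Tendsto (fun t => rm μ X ((1-ε)*t) / t) atTop (nhds ((1-ε)/τ)) := by
    have hcomp : Tendsto (fun t => rm μ X ((1-ε)*t) / ((1-ε)*t)) atTop (nhds (1/τ)) :=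
      hrm.comp hmul2
    have h2 := hcomp.const_mul (1-ε)
    have heq : (fun t => (1-ε) * (rm μ X ((1-ε)*t) / ((1-ε)*t)))
        =ᶠ[atTop] (fun t => rm μ X ((1-ε)*t) / t) := by
      filter_upwards [eventually_gt_atTop (0:ℝ)] with t ht0
      field_simp
    have h3 := Tendsto.congr' heq h2
    rw [show (1-ε)/τ = (1-ε)*(1/τ) by ring]
    exact h3
  have hrm1 : Tendsto (fun t => rm μ X t / t) atTop (nhds (1/τ)) := hrm
  set G := fun t => rq μ X R (ε*t) * (rm μ X ((1-ε)*t) / t)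
    + ρR * (rm μ X t / t - rm μ X ((1-ε)*t) / t) with hG
  have hGlim : Tendsto G atTop (nhds (0 * ((1-ε)/τ) + ρR * (1/τ - (1-ε)/τ))) :=
    (hq.mul hrm2).add (((hrm1.sub hrm2)).const_mul ρR)
  have hL : 0 * ((1-ε)/τ) + ρR * (1/τ - (1-ε)/τ) = ρR * (ε/τ) := by
    rw [zero_mul, zero_add, div_sub_div_same]
    congr 2
    ring
  rw [hL] at hGlim
  have hGev : ∀ᶠ t in atTop, G t < δ := hGlim.eventually_lt_const (by linarith)
  filter_upwards [hGev, eventually_gt_atTop (0:ℝ)] with t hGt ht0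
  have hbd := ER_diff_bound μ X R hmeas hindep hident hpos hRint t ε ht0.le hε0.le hε1
  rw [Real.norm_eq_abs, abs_div, abs_of_pos ht0]
  calc |(∫ ω, (∑ n ∈ Finset.range (rN X t ω), R n ω) ∂μ) - (∫ ω, R 0 ω ∂μ) * rm μ X t| / t
      ≤ (rq μ X R (ε*t) * rm μ X ((1-ε)*t) + ρR * (rm μ X t - rm μ X ((1-ε)*t))) / t := by
        gcongr
    _ = G t := by
        rw [hG]
        ring
    _ < δ := hGt

end Renewal

/-- Renewal reward theorem, expectation version: `E[R(t)]/t → r/τ`. -/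
theorem renewal_reward_mean
    {Ω : Type*} [MeasurableSpace Ω] (μ : Measure Ω) [IsProbabilityMeasure μ]
    (X R : ℕ → Ω → ℝ)
    (hmeas : ∀ n, Measurable fun ω => (X n ω, R n ω))
    (hindep : iIndepFun (fun n ω => (X n ω, R n ω)) μ)
    (hident : ∀ n, IdentDistrib (fun ω => (X n ω, R n ω)) (fun ω => (X 0 ω, R 0 ω)) μ μ)
    (hpos : ∀ n ω, 0 < X n ω)
    (hXint : Integrable (X 0) μ) (hRint : Integrable (R 0) μ)
    (τ r : ℝ) (hτ : μ[X 0] = τ) (hr : μ[R 0] = r) :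
    Tendsto (fun t : ℝ =>
      (∫ ω, (∑ n ∈ Finset.range (rN X t ω), R n ω) ∂μ) / t) atTop (nhds (r / τ)) := by
  subst hτ
  subst hr
  have h1 := (rm_div_tendsto μ X R hmeas hindep hident hpos hXint).const_mul (∫ ω, R 0 ω ∂μ)
  have h2 := D_div_tendsto μ X R hmeas hindep hident hpos hXint hRint
  have h3 := h1.add h2
  have hfun : ∀ t, (∫ ω, R 0 ω ∂μ) * (rm μ X t / t)
      + ((∫ ω, (∑ n ∈ Finset.range (rN X t ω), R n ω) ∂μ) - (∫ ω, R 0 ω ∂μ) * rm μ X t) / t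
      = (∫ ω, (∑ n ∈ Finset.range (rN X t ω), R n ω) ∂μ) / t := by
    intro t
    rw [← mul_div_assoc, ← add_div]
    congr 1
    ring
  have h4 := Tendsto.congr hfun h3
  have : (∫ ω, R 0 ω ∂μ) * (1 / (∫ ω, X 0 ω ∂μ)) + 0
      = (∫ ω, R 0 ω ∂μ) / (∫ ω, X 0 ω ∂μ) := by
    rw [add_zero, mul_one_div]
  rw [this] at h4
  exact h4
end

section
/- Under the assumptions of the renewal reward process (i.i.d. pairs (X_n, R_n), τ = E[X_1] < ∞, E[|R_1|] < ∞, r = E[R_1]), the limit inferior satisfies liminf_{t→∞} E[R(t)]/t ≥ r/τ. -/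
open MeasureTheory ProbabilityTheory Filter Topology
open scoped ENNReal NNReal

lemma rr_mono {g : ℕ → ℝ} (hg : ∀ i, 0 ≤ g i) :
    Monotone (fun n => ∑ i ∈ Finset.range n, g i) := fun a b hab =>
  Finset.sum_le_sum_of_subset_of_nonneg (Finset.range_subset_range.2 hab) (fun i _ _ => hg i)

lemma rr_bddAbove {g : ℕ → ℝ} {t : ℝ} (hg : Tendsto g atTop atTop) :
    BddAbove {n | g n ≤ t} := by
  obtain ⟨m, hm⟩ := (hg.eventually_gt_atTop t).exists_forall_of_atTop
  refine ⟨m, fun n hn => ?_⟩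
  by_contra hc
  exact absurd hn (not_le.2 (hm n (le_of_not_ge hc)))

lemma rr_le_csSup_iff {g : ℕ → ℝ} {t : ℝ} (hg : Monotone g) (h0 : g 0 ≤ t)
    (hb : BddAbove {n | g n ≤ t}) (k : ℕ) : k ≤ sSup {n | g n ≤ t} ↔ g k ≤ t := by
  have hne : {n | g n ≤ t}.Nonempty := ⟨0, h0⟩
  constructor
  · intro hk
    exact le_trans (hg hk) (Nat.sSup_mem hne hb)
  · intro hk
    exact le_csSup hb hk

lemma rr_tendsto_atTop {a : ℕ → ℝ} {L : ℝ} (hL : 0 < L)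
    (h : Tendsto (fun n => a n / n) atTop (𝓝 L)) : Tendsto a atTop atTop := by
  have h2 : ∀ᶠ n : ℕ in atTop, L / 2 ≤ a n / n :=
    h.eventually (eventually_ge_nhds (by linarith))
  have h3 : ∀ᶠ n : ℕ in atTop, L / 2 * n ≤ a n := by
    filter_upwards [h2, eventually_ge_atTop 1] with n hn hn1
    have hn0 : (0 : ℝ) < n := by exact_mod_cast hn1
    calc L / 2 * n ≤ a n / n * n := by gcongr
    _ = a n := by field_simp
  exact tendsto_atTop_mono' _ h3
    ((tendsto_natCast_atTop_atTop (R := ℝ)).const_mul_atTop (by linarith))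

lemma rr_wald {Ω : Type*} [MeasurableSpace Ω] (μ : Measure Ω) [IsProbabilityMeasure μ]
    (X R : ℕ → Ω → ℝ)
    (hmeas : ∀ n, Measurable fun ω => (X n ω, R n ω))
    (hindep : iIndepFun (fun n ω => (X n ω, R n ω)) μ)
    (hident : ∀ n, IdentDistrib (fun ω => (X n ω, R n ω)) (fun ω => (X 0 ω, R 0 ω)) μ μ)
    (f : ℝ → ℝ) (hf : Measurable f) (h : ℝ × ℝ → ℝ≥0∞) (hh : Measurable h) (s : ℝ) :
    ∫⁻ ω, ∑' n, h (X n ω, R n ω) *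
        Set.indicator {ω' | ∑ i ∈ Finset.range n, f (X i ω') ≤ s} (fun _ => (1:ℝ≥0∞)) ω ∂μ
      = (∫⁻ ω, h (X 0 ω, R 0 ω) ∂μ) *
        ∑' n, μ {ω | ∑ i ∈ Finset.range n, f (X i ω) ≤ s} := by
  have hXm : ∀ n, Measurable (X n) := fun n => (measurable_fst.comp (hmeas n))
  have hSm : ∀ n, Measurable fun ω => ∑ i ∈ Finset.range n, f (X i ω) :=
    fun n => Finset.measurable_sum _ (fun i _ => hf.comp (hXm i))
  have hA : ∀ n, MeasurableSet {ω | ∑ i ∈ Finset.range n, f (X i ω) ≤ s} :=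
    fun n => measurableSet_le (hSm n) measurable_const
  have hterm : ∀ n, Measurable fun ω => h (X n ω, R n ω) *
      Set.indicator {ω' | ∑ i ∈ Finset.range n, f (X i ω') ≤ s} (fun _ => (1:ℝ≥0∞)) ω :=
    fun n => (hh.comp (hmeas n)).mul (measurable_const.indicator (hA n))
  rw [lintegral_tsum (fun n => (hterm n).aemeasurable)]
  have key : ∀ n, ∫⁻ ω, h (X n ω, R n ω) *
      Set.indicator {ω' | ∑ i ∈ Finset.range n, f (X i ω') ≤ s} (fun _ => (1:ℝ≥0∞)) ω ∂μ
      = (∫⁻ ω, h (X 0 ω, R 0 ω) ∂μ) * μ {ω | ∑ i ∈ Finset.range n, f (X i ω) ≤ s} := by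
    intro n
    have hJ := hindep.indepFun_finset {n} (Finset.range n)
      (Finset.disjoint_singleton_left.2 (by simp)) hmeas
    have hφ1 : Measurable fun v : ({n} : Finset ℕ) → ℝ × ℝ =>
        h (v ⟨n, Finset.mem_singleton_self n⟩) := hh.comp (measurable_pi_apply _)
    have hφ2 : Measurable fun v : ↥(Finset.range n) → ℝ × ℝ =>
        Set.indicator {v' : ↥(Finset.range n) → ℝ × ℝ |
          ∑ i : ↥(Finset.range n), f (v' i).1 ≤ s} (fun _ => (1:ℝ≥0∞)) v :=
      measurable_const.indicator (measurableSet_le (Finset.measurable_sum _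
        (fun i _ => hf.comp (measurable_fst.comp (measurable_pi_apply i)))) measurable_const)
    have hind := hJ.comp hφ1 hφ2
    have e2 : ((fun v : ↥(Finset.range n) → ℝ × ℝ =>
        Set.indicator {v' : ↥(Finset.range n) → ℝ × ℝ |
          ∑ i : ↥(Finset.range n), f (v' i).1 ≤ s} (fun _ => (1:ℝ≥0∞)) v) ∘
        (fun ω (i : ↥(Finset.range n)) => (X i ω, R i ω)))
        = fun ω => Set.indicator {ω' | ∑ i ∈ Finset.range n, f (X i ω') ≤ s}
            (fun _ => (1:ℝ≥0∞)) ω := by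
      funext ω
      simp only [Function.comp_apply, Set.indicator_apply, Set.mem_setOf_eq]
      rw [Finset.sum_coe_sort (Finset.range n) (fun i => f (X i ω))]
    have e1 : ((fun v : ↥({n} : Finset ℕ) → ℝ × ℝ => h (v ⟨n, Finset.mem_singleton_self n⟩)) ∘
        (fun ω (i : ↥({n} : Finset ℕ)) => (X i ω, R i ω))) = fun ω => h (X n ω, R n ω) := rfl
    rw [e2, e1] at hind
    rw [lintegral_mul_eq_lintegral_mul_lintegral_of_indepFun''
      ((show Measurable fun ω => h (X n ω, R n ω) from hh.comp (hmeas n)).aemeasurable)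
      ((measurable_const.indicator (hA n)).aemeasurable) hind,
      lintegral_indicator_const (hA n), one_mul]
    congr 1
    calc ∫⁻ ω, h (X n ω, R n ω) ∂μ
        = ∫⁻ q, h q ∂(Measure.map (fun ω => (X n ω, R n ω)) μ) :=
          (lintegral_map hh (hmeas n)).symm
      _ = ∫⁻ q, h q ∂(Measure.map (fun ω => (X 0 ω, R 0 ω)) μ) := by rw [(hident n).map_eq]
      _ = ∫⁻ ω, h (X 0 ω, R 0 ω) ∂μ := lintegral_map hh (hmeas 0)
  rw [tsum_congr key, ENNReal.tsum_mul_left]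

lemma rr_N_facts {x : ℕ → ℝ} {t : ℝ} (hx : ∀ i, 0 ≤ x i) (ht : 0 ≤ t)
    (hg : Tendsto (fun n => ∑ i ∈ Finset.range n, x i) atTop atTop) (k : ℕ) :
    k ≤ sSup {n | ∑ i ∈ Finset.range n, x i ≤ t} ↔ ∑ i ∈ Finset.range k, x i ≤ t :=
  rr_le_csSup_iff (rr_mono hx) (by simpa) (rr_bddAbove hg) k

lemma rr_tsum_ofReal {w : ℕ → ℝ} {m : ℕ} (h0 : ∀ n, m ≤ n → w n = 0) (hnn : ∀ n, 0 ≤ w n) :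
    ∑' n, ENNReal.ofReal (w n) = ENNReal.ofReal (∑ n ∈ Finset.range m, w n) := by
  rw [tsum_eq_sum (s := Finset.range m) (fun n hn => by
      rw [h0 n (by simpa using hn)]; simp),
    ENNReal.ofReal_sum_of_nonneg (fun i _ => hnn i)]

lemma rr_t_bound {Ω : Type*} [MeasurableSpace Ω] (μ : Measure Ω) [IsProbabilityMeasure μ]
    (X R : ℕ → Ω → ℝ)
    (hmeas : ∀ n, Measurable fun ω => (X n ω, R n ω))
    (hindep : iIndepFun (fun n ω => (X n ω, R n ω)) μ)
    (hident : ∀ n, IdentDistrib (fun ω => (X n ω, R n ω)) (fun ω => (X 0 ω, R 0 ω)) μ μ)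
    (hpos : ∀ n ω, 0 < X n ω)
    (hXint : Integrable (X 0) μ) (hRint : Integrable (R 0) μ)
    (c b : ℕ) (t : ℝ) (ht : (c : ℝ) + 1 ≤ t) :
    ((∫ ω, (if X 0 ω ≤ (c:ℝ) then max (R 0 ω) 0 else 0) ∂μ) * ((t - c) / μ[X 0])
      - (∫ ω, max (-R 0 ω) 0 ∂μ) *
          ((t + ((b:ℝ)+1)) / ∫ ω, min (X 0 ω) ((b:ℝ)+1) ∂μ)) / t
      ≤ (∫ ω, ∑ n ∈ Finset.range (rN X t ω), R n ω ∂μ) / t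
    ∧ (∫ ω, ∑ n ∈ Finset.range (rN X t ω), R n ω ∂μ) / t
      ≤ (∫ ω, |R 0 ω| ∂μ) * ((t + ((b:ℝ)+1)) / ∫ ω, min (X 0 ω) ((b:ℝ)+1) ∂μ) / t := by
  -- basic measurability
  have hXm : ∀ n, Measurable (X n) := fun n => measurable_fst.comp (hmeas n)
  have hRm : ∀ n, Measurable (R n) := fun n => measurable_snd.comp (hmeas n)
  have ht0 : (0:ℝ) ≤ t := le_trans (by positivity) ht
  have htpos : (0:ℝ) < t := lt_of_lt_of_le (by positivity) ht
  have htc : (0:ℝ) ≤ t - c := by linarith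
  have hb1 : (0:ℝ) < (b:ℝ) + 1 := by positivity
  -- truncated increments
  set Y : ℕ → Ω → ℝ := fun n ω => min (X n ω) ((b:ℝ)+1) with hYdef
  have hYm : ∀ n, Measurable (Y n) := fun n => (hXm n).min measurable_const
  have hYpos : ∀ n ω, 0 < Y n ω := fun n ω => lt_min (hpos n ω) hb1
  have hYleX : ∀ n ω, Y n ω ≤ X n ω := fun n ω => min_le_left _ _
  have hYint : Integrable (Y 0) μ := by
    refine hXint.mono (hYm 0).aestronglyMeasurable ?_
    filter_upwards with ω
    rw [Real.norm_eq_abs, Real.norm_eq_abs, abs_of_pos (hYpos 0 ω), abs_of_pos (hpos 0 ω)]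
    exact hYleX 0 ω
  have hτb_pos : 0 < ∫ ω, Y 0 ω ∂μ := by
    rw [integral_pos_iff_support_of_nonneg (fun ω => (hYpos 0 ω).le) hYint]
    have : Function.support (Y 0) = Set.univ := Set.eq_univ_of_forall (fun ω => (hYpos 0 ω).ne')
    simp [this]
  have hτ_pos : 0 < μ[X 0] := by
    rw [integral_pos_iff_support_of_nonneg (fun ω => (hpos 0 ω).le) hXint]
    have : Function.support (X 0) = Set.univ := Set.eq_univ_of_forall (fun ω => (hpos 0 ω).ne')
    simp [this]
  -- strong law: partial sums tend to infinity a.s.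
  have hmin_meas : Measurable (fun q : ℝ × ℝ => min q.1 ((b:ℝ)+1)) :=
    measurable_fst.min measurable_const
  have hSLY : ∀ᵐ ω ∂μ, Tendsto (fun n => ∑ i ∈ Finset.range n, Y i ω) atTop atTop := by
    have hsl := strong_law_ae_real Y hYint
      (fun i j hij => ((hindep.indepFun hij).comp hmin_meas hmin_meas))
      (fun i => (hident i).comp hmin_meas)
    filter_upwards [hsl] with ω hω using rr_tendsto_atTop hτb_pos hω
  have hSLX : ∀ᵐ ω ∂μ, Tendsto (fun n => ∑ i ∈ Finset.range n, X i ω) atTop atTop := by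
    filter_upwards [hSLY] with ω hω
    exact tendsto_atTop_mono
      (fun n => Finset.sum_le_sum (fun i _ => hYleX i ω)) hω
  -- ENNReal-valued weight functions
  set h1 : ℝ × ℝ → ℝ≥0∞ := fun q => if q.1 ≤ (c:ℝ) then ENNReal.ofReal (max q.2 0) else 0
    with hh1def
  have hh1 : Measurable h1 := Measurable.ite (measurableSet_le measurable_fst measurable_const)
    ((measurable_snd.max measurable_const).ennreal_ofReal) measurable_const
  set h2 : ℝ × ℝ → ℝ≥0∞ := fun q => ENNReal.ofReal (max (-q.2) 0) with hh2def
  have hh2 : Measurable h2 := (measurable_snd.neg.max measurable_const).ennreal_ofReal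
  set h3 : ℝ × ℝ → ℝ≥0∞ := fun q => ENNReal.ofReal |q.2| with hh3def
  have hh3 : Measurable h3 := measurable_snd.abs.ennreal_ofReal
  set h4 : ℝ × ℝ → ℝ≥0∞ := fun q => ENNReal.ofReal q.1 with hh4def
  have hh4 : Measurable h4 := measurable_fst.ennreal_ofReal
  set h5 : ℝ × ℝ → ℝ≥0∞ := fun q => ENNReal.ofReal (min q.1 ((b:ℝ)+1)) with hh5def
  have hh5 : Measurable h5 := hmin_meas.ennreal_ofReal
  -- renewal measures
  set M : ℝ → ℝ≥0∞ := fun s => ∑' n, μ {ω | ∑ i ∈ Finset.range n, X i ω ≤ s} with hMdef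
  set MY : ℝ≥0∞ := ∑' n, μ {ω | ∑ i ∈ Finset.range n, Y i ω ≤ t} with hMYdef
  -- the五 wald identities

  -- the five wald identities (with beta-reduced types)
  have wald1 : ∫⁻ ω, ∑' n, h1 (X n ω, R n ω) *
        Set.indicator {ω' | ∑ i ∈ Finset.range n, X i ω' ≤ t - c} (fun _ => (1:ℝ≥0∞)) ω ∂μ
      = (∫⁻ ω, h1 (X 0 ω, R 0 ω) ∂μ) *
        ∑' n, μ {ω | ∑ i ∈ Finset.range n, X i ω ≤ t - c} :=
    rr_wald μ X R hmeas hindep hident (fun x => x) measurable_id h1 hh1 (t - c)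
  have wald2 : ∫⁻ ω, ∑' n, h2 (X n ω, R n ω) *
        Set.indicator {ω' | ∑ i ∈ Finset.range n, X i ω' ≤ t} (fun _ => (1:ℝ≥0∞)) ω ∂μ
      = (∫⁻ ω, h2 (X 0 ω, R 0 ω) ∂μ) *
        ∑' n, μ {ω | ∑ i ∈ Finset.range n, X i ω ≤ t} :=
    rr_wald μ X R hmeas hindep hident (fun x => x) measurable_id h2 hh2 t
  have wald3 : ∫⁻ ω, ∑' n, h3 (X n ω, R n ω) *
        Set.indicator {ω' | ∑ i ∈ Finset.range n, X i ω' ≤ t} (fun _ => (1:ℝ≥0∞)) ω ∂μ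
      = (∫⁻ ω, h3 (X 0 ω, R 0 ω) ∂μ) *
        ∑' n, μ {ω | ∑ i ∈ Finset.range n, X i ω ≤ t} :=
    rr_wald μ X R hmeas hindep hident (fun x => x) measurable_id h3 hh3 t
  have wald4 : ∫⁻ ω, ∑' n, h4 (X n ω, R n ω) *
        Set.indicator {ω' | ∑ i ∈ Finset.range n, X i ω' ≤ t - c} (fun _ => (1:ℝ≥0∞)) ω ∂μ
      = (∫⁻ ω, h4 (X 0 ω, R 0 ω) ∂μ) *
        ∑' n, μ {ω | ∑ i ∈ Finset.range n, X i ω ≤ t - c} :=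
    rr_wald μ X R hmeas hindep hident (fun x => x) measurable_id h4 hh4 (t - c)
  have wald5 : ∫⁻ ω, ∑' n, h5 (X n ω, R n ω) *
        Set.indicator {ω' | ∑ i ∈ Finset.range n, min (X i ω') ((b:ℝ)+1) ≤ t}
          (fun _ => (1:ℝ≥0∞)) ω ∂μ
      = (∫⁻ ω, h5 (X 0 ω, R 0 ω) ∂μ) *
        ∑' n, μ {ω | ∑ i ∈ Finset.range n, min (X i ω) ((b:ℝ)+1) ≤ t} :=
    rr_wald μ X R hmeas hindep hident (fun x => min x ((b:ℝ)+1))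
      (measurable_id.min measurable_const) h5 hh5 t
  -- constants
  have hI1 : ∫⁻ ω, h1 (X 0 ω, R 0 ω) ∂μ
      = ENNReal.ofReal (∫ ω, (if X 0 ω ≤ (c:ℝ) then max (R 0 ω) 0 else 0) ∂μ) := by
    have hint : Integrable (fun ω => if X 0 ω ≤ (c:ℝ) then max (R 0 ω) 0 else 0) μ := by
      refine hRint.abs.mono ((Measurable.ite (measurableSet_le (hXm 0) measurable_const)
        ((hRm 0).max measurable_const) measurable_const).aestronglyMeasurable) ?_
      filter_upwards with ω
      rw [Real.norm_eq_abs, Real.norm_eq_abs, abs_abs]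
      split
      · rw [abs_of_nonneg (le_max_right _ _)]
        exact max_le (le_abs_self _) (abs_nonneg _)
      · simp [abs_nonneg]
    rw [lintegral_congr (g := fun ω => ENNReal.ofReal
        (if X 0 ω ≤ (c:ℝ) then max (R 0 ω) 0 else 0))
      (fun ω => by simp only [hh1def]; split <;> simp),
      ← ofReal_integral_eq_lintegral_ofReal hint
        (Filter.Eventually.of_forall (fun ω => by dsimp only; split <;> positivity))]
  have hI2 : ∫⁻ ω, h2 (X 0 ω, R 0 ω) ∂μ
      = ENNReal.ofReal (∫ ω, max (-R 0 ω) 0 ∂μ) :=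
    (ofReal_integral_eq_lintegral_ofReal hRint.neg_part
      (Filter.Eventually.of_forall (fun ω => le_max_right _ _))).symm
  have hI3 : ∫⁻ ω, h3 (X 0 ω, R 0 ω) ∂μ
      = ENNReal.ofReal (∫ ω, |R 0 ω| ∂μ) :=
    (ofReal_integral_eq_lintegral_ofReal hRint.abs
      (Filter.Eventually.of_forall (fun ω => abs_nonneg _))).symm
  have hI4 : ∫⁻ ω, h4 (X 0 ω, R 0 ω) ∂μ = ENNReal.ofReal (μ[X 0]) :=
    (ofReal_integral_eq_lintegral_ofReal hXint
      (Filter.Eventually.of_forall (fun ω => (hpos 0 ω).le))).symm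
  have hI5 : ∫⁻ ω, h5 (X 0 ω, R 0 ω) ∂μ
      = ENNReal.ofReal (∫ ω, min (X 0 ω) ((b:ℝ)+1) ∂μ) :=
    (ofReal_integral_eq_lintegral_ofReal hYint
      (Filter.Eventually.of_forall (fun ω => (hYpos 0 ω).le))).symm
  -- a.e. pointwise bound for the truncated renewals (upper)
  have hae5 : ∀ᵐ ω ∂μ, (∑' n, h5 (X n ω, R n ω) *
      Set.indicator {ω' | ∑ i ∈ Finset.range n, min (X i ω') ((b:ℝ)+1) ≤ t}
        (fun _ => (1:ℝ≥0∞)) ω) ≤ ENNReal.ofReal (t + ((b:ℝ)+1)) := by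
    filter_upwards [hSLY] with ω hω
    have keyY := rr_N_facts (x := fun i => min (X i ω) ((b:ℝ)+1))
      (fun i => (hYpos i ω).le) ht0 hω
    set NY := sSup {n | ∑ i ∈ Finset.range n, min (X i ω) ((b:ℝ)+1) ≤ t} with hNYdef
    have hterm : ∀ n, h5 (X n ω, R n ω) *
        Set.indicator {ω' | ∑ i ∈ Finset.range n, min (X i ω') ((b:ℝ)+1) ≤ t}
          (fun _ => (1:ℝ≥0∞)) ω
        = ENNReal.ofReal (if (∑ i ∈ Finset.range n, min (X i ω) ((b:ℝ)+1)) ≤ t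
            then min (X n ω) ((b:ℝ)+1) else 0) := by
      intro n
      rw [Set.indicator_apply]
      by_cases hn : (∑ i ∈ Finset.range n, min (X i ω) ((b:ℝ)+1)) ≤ t <;>
        simp [hh5def, hn]
    rw [tsum_congr hterm, rr_tsum_ofReal (m := NY + 1)
      (fun n hn => if_neg (fun hcon => absurd ((keyY n).2 hcon) (by omega)))
      (fun n => by split
                   · exact (hYpos n ω).le
                   · exact le_rfl)]
    apply ENNReal.ofReal_le_ofReal
    rw [Finset.sum_congr rfl (fun n hn =>
      if_pos ((keyY n).1 (Nat.lt_succ_iff.1 (Finset.mem_range.1 hn)))),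
      Finset.sum_range_succ]
    have h1' : ∑ i ∈ Finset.range NY, min (X i ω) ((b:ℝ)+1) ≤ t := (keyY NY).1 le_rfl
    have h2' : min (X NY ω) ((b:ℝ)+1) ≤ (b:ℝ)+1 := min_le_right _ _
    linarith
  -- a.e. pointwise bound for the untruncated renewals (lower)
  have hae4 : ∀ᵐ ω ∂μ, ENNReal.ofReal (t - c) ≤ ∑' n, h4 (X n ω, R n ω) *
      Set.indicator {ω' | ∑ i ∈ Finset.range n, X i ω' ≤ t - c} (fun _ => (1:ℝ≥0∞)) ω := by
    filter_upwards [hSLX] with ω hω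
    have keyX := rr_N_facts (x := fun i => X i ω) (fun i => (hpos i ω).le) htc hω
    set N4 := sSup {n | ∑ i ∈ Finset.range n, X i ω ≤ t - c} with hN4def
    have hgt : t - c < ∑ i ∈ Finset.range (N4 + 1), X i ω :=
      lt_of_not_ge (fun hcon => absurd ((keyX (N4+1)).2 hcon) (by omega))
    calc ENNReal.ofReal (t - c) ≤ ENNReal.ofReal (∑ i ∈ Finset.range (N4+1), X i ω) :=
          ENNReal.ofReal_le_ofReal hgt.le
      _ = ∑ n ∈ Finset.range (N4+1), ENNReal.ofReal (X n ω) :=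
          ENNReal.ofReal_sum_of_nonneg (fun i _ => (hpos i ω).le)
      _ = ∑ n ∈ Finset.range (N4+1), h4 (X n ω, R n ω) *
            Set.indicator {ω' | ∑ i ∈ Finset.range n, X i ω' ≤ t - c} (fun _ => (1:ℝ≥0∞)) ω := by
          refine Finset.sum_congr rfl (fun n hn => ?_)
          have hmem : ∑ i ∈ Finset.range n, X i ω ≤ t - c :=
            (keyX n).1 (Nat.lt_succ_iff.1 (Finset.mem_range.1 hn))
          simp [hh4def, Set.indicator_apply, hmem]
      _ ≤ ∑' n, h4 (X n ω, R n ω) *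
            Set.indicator {ω' | ∑ i ∈ Finset.range n, X i ω' ≤ t - c} (fun _ => (1:ℝ≥0∞)) ω :=
          ENNReal.sum_le_tsum _
  -- a.e. comparison of the reward sum with the weight tsums
  have hae_main : ∀ᵐ ω ∂μ,
      |∑ n ∈ Finset.range (rN X t ω), R n ω| ≤
        (∑' n, h3 (X n ω, R n ω) *
          Set.indicator {ω' | ∑ i ∈ Finset.range n, X i ω' ≤ t} (fun _ => (1:ℝ≥0∞)) ω).toReal
      ∧ (∑' n, h1 (X n ω, R n ω) *
          Set.indicator {ω' | ∑ i ∈ Finset.range n, X i ω' ≤ t - c} (fun _ => (1:ℝ≥0∞)) ω).toReal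
        - (∑' n, h2 (X n ω, R n ω) *
          Set.indicator {ω' | ∑ i ∈ Finset.range n, X i ω' ≤ t} (fun _ => (1:ℝ≥0∞)) ω).toReal
        ≤ ∑ n ∈ Finset.range (rN X t ω), R n ω := by
    filter_upwards [hSLX] with ω hω
    have keyN : ∀ k, k ≤ rN X t ω ↔ ∑ i ∈ Finset.range k, X i ω ≤ t :=
      rr_N_facts (x := fun i => X i ω) (fun i => (hpos i ω).le) ht0 hω
    set N := rN X t ω with hNdef
    -- values of the three tsums
    have hg3term : ∀ n, h3 (X n ω, R n ω) *
        Set.indicator {ω' | ∑ i ∈ Finset.range n, X i ω' ≤ t} (fun _ => (1:ℝ≥0∞)) ω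
        = ENNReal.ofReal (if ∑ i ∈ Finset.range n, X i ω ≤ t then |R n ω| else 0) := by
      intro n
      rw [Set.indicator_apply]
      by_cases hn : (∑ i ∈ Finset.range n, X i ω) ≤ t <;> simp [hh3def, hn]
    have hg3 : (∑' n, h3 (X n ω, R n ω) *
        Set.indicator {ω' | ∑ i ∈ Finset.range n, X i ω' ≤ t} (fun _ => (1:ℝ≥0∞)) ω)
        = ENNReal.ofReal (∑ n ∈ Finset.range (N+1),
            if ∑ i ∈ Finset.range n, X i ω ≤ t then |R n ω| else 0) := by
      rw [tsum_congr hg3term]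
      exact rr_tsum_ofReal
        (fun n hn => if_neg (fun hcon => absurd ((keyN n).2 hcon) (by omega)))
        (fun n => by split
                     · exact abs_nonneg _
                     · exact le_rfl)
    have hg1term : ∀ n, h1 (X n ω, R n ω) *
        Set.indicator {ω' | ∑ i ∈ Finset.range n, X i ω' ≤ t - c} (fun _ => (1:ℝ≥0∞)) ω
        = ENNReal.ofReal (if (∑ i ∈ Finset.range n, X i ω ≤ t - c ∧ X n ω ≤ (c:ℝ))
            then max (R n ω) 0 else 0) := by
      intro n
      rw [Set.indicator_apply]
      by_cases hn : (∑ i ∈ Finset.range n, X i ω) ≤ t - c <;>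
        by_cases hx : X n ω ≤ (c:ℝ) <;> simp [hh1def, hn, hx]
    have hg1 : (∑' n, h1 (X n ω, R n ω) *
        Set.indicator {ω' | ∑ i ∈ Finset.range n, X i ω' ≤ t - c} (fun _ => (1:ℝ≥0∞)) ω)
        = ENNReal.ofReal (∑ n ∈ Finset.range (N+1),
            if (∑ i ∈ Finset.range n, X i ω ≤ t - c ∧ X n ω ≤ (c:ℝ))
            then max (R n ω) 0 else 0) := by
      rw [tsum_congr hg1term]
      exact rr_tsum_ofReal
        (fun n hn => if_neg (fun hcon =>
          absurd ((keyN n).2 (le_trans hcon.1 (by linarith))) (by omega)))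
        (fun n => by split
                     · exact le_max_right _ _
                     · exact le_rfl)
    have hg2term : ∀ n, h2 (X n ω, R n ω) *
        Set.indicator {ω' | ∑ i ∈ Finset.range n, X i ω' ≤ t} (fun _ => (1:ℝ≥0∞)) ω
        = ENNReal.ofReal (if ∑ i ∈ Finset.range n, X i ω ≤ t then max (-R n ω) 0 else 0) := by
      intro n
      rw [Set.indicator_apply]
      by_cases hn : (∑ i ∈ Finset.range n, X i ω) ≤ t <;> simp [hh2def, hn]
    have hg2 : (∑' n, h2 (X n ω, R n ω) *
        Set.indicator {ω' | ∑ i ∈ Finset.range n, X i ω' ≤ t} (fun _ => (1:ℝ≥0∞)) ω)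
        = ENNReal.ofReal (∑ n ∈ Finset.range (N+1),
            if ∑ i ∈ Finset.range n, X i ω ≤ t then max (-R n ω) 0 else 0) := by
      rw [tsum_congr hg2term]
      exact rr_tsum_ofReal
        (fun n hn => if_neg (fun hcon => absurd ((keyN n).2 hcon) (by omega)))
        (fun n => by split
                     · exact le_max_right _ _
                     · exact le_rfl)
    -- rewrite the reward sum
    have hWrep : ∑ n ∈ Finset.range N, R n ω = ∑ n ∈ Finset.range (N + 1),
        (if ∑ i ∈ Finset.range (n+1), X i ω ≤ t then R n ω else 0) := by
      rw [Finset.sum_range_succ,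
        if_neg (fun hcon => absurd ((keyN (N+1)).2 hcon) (by omega)), add_zero]
      exact Finset.sum_congr rfl (fun n hn =>
        (if_pos ((keyN (n+1)).1 (Finset.mem_range.1 hn))).symm)
    constructor
    · -- upper bound
      rw [hg3, ENNReal.toReal_ofReal (Finset.sum_nonneg (fun n _ => by
        split
        · exact abs_nonneg _
        · exact le_rfl))]
      calc |∑ n ∈ Finset.range N, R n ω| ≤ ∑ n ∈ Finset.range N, |R n ω| :=
            Finset.abs_sum_le_sum_abs _ _
        _ = ∑ n ∈ Finset.range N, (if ∑ i ∈ Finset.range n, X i ω ≤ t then |R n ω| else 0) :=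
            Finset.sum_congr rfl (fun n hn =>
              (if_pos ((keyN n).1 (le_of_lt (Finset.mem_range.1 hn)))).symm)
        _ ≤ ∑ n ∈ Finset.range (N+1),
              (if ∑ i ∈ Finset.range n, X i ω ≤ t then |R n ω| else 0) := by
            refine Finset.sum_le_sum_of_subset_of_nonneg
              (Finset.range_subset_range.2 (Nat.le_succ _)) (fun n _ _ => ?_)
            split
            · exact abs_nonneg _
            · exact le_rfl
    · -- lower bound
      rw [hg1, hg2, ENNReal.toReal_ofReal (Finset.sum_nonneg (fun n _ => by
          split
          · exact le_max_right _ _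
          · exact le_rfl)),
        ENNReal.toReal_ofReal (Finset.sum_nonneg (fun n _ => by
          split
          · exact le_max_right _ _
          · exact le_rfl)), hWrep, ← Finset.sum_sub_distrib]
      refine Finset.sum_le_sum (fun n _ => ?_)
      by_cases hS : ∑ i ∈ Finset.range (n+1), X i ω ≤ t
      · rw [if_pos hS]
        have hSn : ∑ i ∈ Finset.range n, X i ω ≤ t := by
          rw [Finset.sum_range_succ] at hS
          have := hpos n ω
          linarith
        rw [if_pos hSn]
        have hle : (if (∑ i ∈ Finset.range n, X i ω ≤ t - c ∧ X n ω ≤ (c:ℝ))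
            then max (R n ω) 0 else 0) ≤ max (R n ω) 0 := by
          split
          · exact le_rfl
          · exact le_max_right _ _
        calc _ ≤ max (R n ω) 0 - max (-R n ω) 0 := sub_le_sub_right hle _
          _ = R n ω := max_zero_sub_max_neg_zero_eq_self _
      · rw [if_neg hS]
        have ha0 : (if (∑ i ∈ Finset.range n, X i ω ≤ t - c ∧ X n ω ≤ (c:ℝ))
            then max (R n ω) 0 else 0) = 0 := by
          refine if_neg (fun hcon => hS ?_)
          rw [Finset.sum_range_succ]
          have := hcon.1
          have := hcon.2
          linarith
        rw [ha0, zero_sub, neg_nonpos]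
        split
        · exact le_max_right _ _
        · exact le_rfl
  -- measurability of rN and of the reward sum
  have hSXm : ∀ n, Measurable fun ω => ∑ i ∈ Finset.range n, X i ω :=
    fun n => Finset.measurable_sum _ (fun i _ => hXm i)
  have hpre : ∀ j : ℕ, rN X t ⁻¹' {j+1}
      = {ω | ∑ i ∈ Finset.range (j+1), X i ω ≤ t} \
        {ω | ∑ i ∈ Finset.range (j+2), X i ω ≤ t} := by
    intro j
    ext ω
    simp only [Set.mem_preimage, Set.mem_singleton_iff, Set.mem_diff, Set.mem_setOf_eq]
    constructor
    · intro h
      simp only [rN, rS] at h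
      have hbdd : BddAbove {n | ∑ i ∈ Finset.range n, X i ω ≤ t} := by
        by_contra hb
        rw [csSup_of_not_bddAbove hb, csSup_empty] at h
        simp at h
      have hne : {n | ∑ i ∈ Finset.range n, X i ω ≤ t}.Nonempty := by
        by_contra hn
        rw [Set.not_nonempty_iff_eq_empty.1 hn, csSup_empty] at h
        simp at h
      have hmem := Nat.sSup_mem hne hbdd
      rw [h] at hmem
      refine ⟨hmem, fun hcon => ?_⟩
      have := le_csSup hbdd
        (show j+2 ∈ {n | ∑ i ∈ Finset.range n, X i ω ≤ t} from hcon)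
      rw [h] at this
      omega
    · rintro ⟨h1', h2'⟩
      simp only [rN, rS]
      have hmono : Monotone (fun n => ∑ i ∈ Finset.range n, X i ω) :=
        rr_mono (fun i => (hpos i ω).le)
      have hbdd : ∀ n ∈ {n | ∑ i ∈ Finset.range n, X i ω ≤ t}, n ≤ j+1 := by
        intro n hn
        by_contra hc
        push_neg at hc
        exact h2' (le_trans (hmono (by omega : j+2 ≤ n)) hn)
      exact le_antisymm (csSup_le ⟨j+1, h1'⟩ hbdd)
        (le_csSup ⟨j+1, fun n hn => hbdd n hn⟩ h1')
  have hpreM : ∀ j : ℕ, MeasurableSet (rN X t ⁻¹' {j+1}) := fun j => by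
    rw [hpre j]
    exact (measurableSet_le (hSXm (j+1)) measurable_const).diff
      (measurableSet_le (hSXm (j+2)) measurable_const)
  have hrNmeas : Measurable (rN X t) := by
    apply measurable_to_countable'
    intro k
    cases k with
    | zero =>
      have heq : rN X t ⁻¹' {0} = (⋃ j : ℕ, rN X t ⁻¹' {j+1})ᶜ := by
        ext ω
        simp only [Set.mem_preimage, Set.mem_singleton_iff, Set.mem_compl_iff,
          Set.mem_iUnion]
        constructor
        · intro h0 hcon
          obtain ⟨j, hj⟩ := hcon
          omega
        · intro h
          by_contra hne
          exact h ⟨rN X t ω - 1, by omega⟩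
      rw [heq]
      exact (MeasurableSet.iUnion hpreM).compl
    | succ j => exact hpreM j
  have hWmeas : Measurable fun ω => ∑ n ∈ Finset.range (rN X t ω), R n ω := by
    have hg : Measurable (fun p : Ω × ℕ => ∑ n ∈ Finset.range p.2, R n p.1) :=
      measurable_from_prod_countable_left (fun k =>
        show Measurable fun ω => ∑ n ∈ Finset.range k, R n ω from
          Finset.measurable_sum _ (fun n _ => hRm n))
    exact hg.comp (measurable_id.prodMk hrNmeas)
  -- lintegral computations
  have hGmeas : ∀ (h : ℝ × ℝ → ℝ≥0∞), Measurable h → ∀ s : ℝ,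
      Measurable (fun ω => ∑' n, h (X n ω, R n ω) *
        Set.indicator {ω' | ∑ i ∈ Finset.range n, X i ω' ≤ s} (fun _ => (1:ℝ≥0∞)) ω) :=
    fun h hh s => Measurable.ennreal_tsum (fun n => (hh.comp (hmeas n)).mul
      (measurable_const.indicator (measurableSet_le (hSXm n) measurable_const)))
  have hMY_ub : ENNReal.ofReal (∫ ω, min (X 0 ω) ((b:ℝ)+1) ∂μ) *
      (∑' n, μ {ω | ∑ i ∈ Finset.range n, min (X i ω) ((b:ℝ)+1) ≤ t})
      ≤ ENNReal.ofReal (t + ((b:ℝ)+1)) := by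
    rw [← hI5, ← wald5]
    calc ∫⁻ ω, ∑' n, h5 (X n ω, R n ω) *
          Set.indicator {ω' | ∑ i ∈ Finset.range n, min (X i ω') ((b:ℝ)+1) ≤ t}
            (fun _ => (1:ℝ≥0∞)) ω ∂μ
        ≤ ∫⁻ _, ENNReal.ofReal (t + ((b:ℝ)+1)) ∂μ := lintegral_mono_ae hae5
      _ = ENNReal.ofReal (t + ((b:ℝ)+1)) := by simp
  have hMleMY : (∑' n, μ {ω | ∑ i ∈ Finset.range n, X i ω ≤ t})
      ≤ ∑' n, μ {ω | ∑ i ∈ Finset.range n, min (X i ω) ((b:ℝ)+1) ≤ t} :=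
    ENNReal.tsum_le_tsum (fun n => measure_mono (fun ω hω =>
      show ∑ i ∈ Finset.range n, min (X i ω) ((b:ℝ)+1) ≤ t from
        le_trans (Finset.sum_le_sum (fun i _ => min_le_left _ _)) hω))
  have hMt_ub : ENNReal.ofReal (∫ ω, min (X 0 ω) ((b:ℝ)+1) ∂μ) *
      (∑' n, μ {ω | ∑ i ∈ Finset.range n, X i ω ≤ t}) ≤ ENNReal.ofReal (t + ((b:ℝ)+1)) :=
    le_trans (mul_le_mul_right hMleMY _) hMY_ub
  have hMtc_le : (∑' n, μ {ω | ∑ i ∈ Finset.range n, X i ω ≤ t - c})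
      ≤ ∑' n, μ {ω | ∑ i ∈ Finset.range n, X i ω ≤ t} :=
    ENNReal.tsum_le_tsum (fun n => measure_mono (fun ω hω =>
      show ∑ i ∈ Finset.range n, X i ω ≤ t from
        le_trans hω (by linarith : t - (c:ℝ) ≤ t)))
  have hofY_ne : ENNReal.ofReal (∫ ω, min (X 0 ω) ((b:ℝ)+1) ∂μ) ≠ 0 := by
    simp only [ne_eq, ENNReal.ofReal_eq_zero, not_le]
    exact hτb_pos
  have hMt_fin : (∑' n, μ {ω | ∑ i ∈ Finset.range n, X i ω ≤ t}) ≠ ⊤ := by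
    intro hT
    rw [hT, ENNReal.mul_top hofY_ne] at hMt_ub
    exact ENNReal.ofReal_ne_top (top_le_iff.1 hMt_ub)
  have hMtc_fin : (∑' n, μ {ω | ∑ i ∈ Finset.range n, X i ω ≤ t - c}) ≠ ⊤ :=
    fun hT => hMt_fin (top_le_iff.1 (hT ▸ hMtc_le))
  have hτb_nn : (0:ℝ) ≤ ∫ ω, min (X 0 ω) ((b:ℝ)+1) ∂μ := hτb_pos.le
  have hMt_real : (∫ ω, min (X 0 ω) ((b:ℝ)+1) ∂μ) *
      (∑' n, μ {ω | ∑ i ∈ Finset.range n, X i ω ≤ t}).toReal ≤ t + ((b:ℝ)+1) := by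
    have h' := ENNReal.toReal_mono ENNReal.ofReal_ne_top hMt_ub
    rwa [ENNReal.toReal_mul, ENNReal.toReal_ofReal hτb_nn,
      ENNReal.toReal_ofReal (by linarith)] at h'
  have hM_lb : ENNReal.ofReal (t - c) ≤ ENNReal.ofReal (μ[X 0]) *
      (∑' n, μ {ω | ∑ i ∈ Finset.range n, X i ω ≤ t - c}) := by
    rw [← hI4, ← wald4]
    calc ENNReal.ofReal (t - c) = ∫⁻ _, ENNReal.ofReal (t - c) ∂μ := by simp
      _ ≤ _ := lintegral_mono_ae hae4
  have hMtc_real : t - c ≤ μ[X 0] *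
      (∑' n, μ {ω | ∑ i ∈ Finset.range n, X i ω ≤ t - c}).toReal := by
    have hfin : ENNReal.ofReal (μ[X 0]) *
        (∑' n, μ {ω | ∑ i ∈ Finset.range n, X i ω ≤ t - c}) ≠ ⊤ :=
      ENNReal.mul_ne_top ENNReal.ofReal_ne_top hMtc_fin
    have h' := ENNReal.toReal_mono hfin hM_lb
    rwa [ENNReal.toReal_ofReal htc, ENNReal.toReal_mul,
      ENNReal.toReal_ofReal hτ_pos.le] at h'
  -- integrability
  have hApnn : (0:ℝ) ≤ ∫ ω, (if X 0 ω ≤ (c:ℝ) then max (R 0 ω) 0 else 0) ∂μ :=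
    integral_nonneg (fun ω => by dsimp only; split
                                 · exact le_max_right _ _
                                 · exact le_rfl)
  have hAmnn : (0:ℝ) ≤ ∫ ω, max (-R 0 ω) 0 ∂μ :=
    integral_nonneg (fun ω => le_max_right _ _)
  have hAabsnn : (0:ℝ) ≤ ∫ ω, |R 0 ω| ∂μ := integral_nonneg (fun ω => abs_nonneg _)
  have hG1lint : ∫⁻ ω, ∑' n, h1 (X n ω, R n ω) *
      Set.indicator {ω' | ∑ i ∈ Finset.range n, X i ω' ≤ t - c} (fun _ => (1:ℝ≥0∞)) ω ∂μ ≠ ⊤ := by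
    rw [wald1, hI1]
    exact ENNReal.mul_ne_top ENNReal.ofReal_ne_top hMtc_fin
  have hG2lint : ∫⁻ ω, ∑' n, h2 (X n ω, R n ω) *
      Set.indicator {ω' | ∑ i ∈ Finset.range n, X i ω' ≤ t} (fun _ => (1:ℝ≥0∞)) ω ∂μ ≠ ⊤ := by
    rw [wald2, hI2]
    exact ENNReal.mul_ne_top ENNReal.ofReal_ne_top hMt_fin
  have hG3lint : ∫⁻ ω, ∑' n, h3 (X n ω, R n ω) *
      Set.indicator {ω' | ∑ i ∈ Finset.range n, X i ω' ≤ t} (fun _ => (1:ℝ≥0∞)) ω ∂μ ≠ ⊤ := by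
    rw [wald3, hI3]
    exact ENNReal.mul_ne_top ENNReal.ofReal_ne_top hMt_fin
  have hG1int : Integrable (fun ω => (∑' n, h1 (X n ω, R n ω) *
      Set.indicator {ω' | ∑ i ∈ Finset.range n, X i ω' ≤ t - c}
        (fun _ => (1:ℝ≥0∞)) ω).toReal) μ :=
    integrable_toReal_of_lintegral_ne_top (hGmeas h1 hh1 (t-c)).aemeasurable hG1lint
  have hG2int : Integrable (fun ω => (∑' n, h2 (X n ω, R n ω) *
      Set.indicator {ω' | ∑ i ∈ Finset.range n, X i ω' ≤ t}
        (fun _ => (1:ℝ≥0∞)) ω).toReal) μ :=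
    integrable_toReal_of_lintegral_ne_top (hGmeas h2 hh2 t).aemeasurable hG2lint
  have hG3int : Integrable (fun ω => (∑' n, h3 (X n ω, R n ω) *
      Set.indicator {ω' | ∑ i ∈ Finset.range n, X i ω' ≤ t}
        (fun _ => (1:ℝ≥0∞)) ω).toReal) μ :=
    integrable_toReal_of_lintegral_ne_top (hGmeas h3 hh3 t).aemeasurable hG3lint
  have hWint : Integrable (fun ω => ∑ n ∈ Finset.range (rN X t ω), R n ω) μ := by
    refine hG3int.mono hWmeas.aestronglyMeasurable ?_
    filter_upwards [hae_main] with ω hω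
    rw [Real.norm_eq_abs, Real.norm_eq_abs]
    exact le_trans hω.1 (le_abs_self _)
  have hintG1 : ∫ ω, (∑' n, h1 (X n ω, R n ω) *
      Set.indicator {ω' | ∑ i ∈ Finset.range n, X i ω' ≤ t - c}
        (fun _ => (1:ℝ≥0∞)) ω).toReal ∂μ
      = (∫ ω, (if X 0 ω ≤ (c:ℝ) then max (R 0 ω) 0 else 0) ∂μ) *
        (∑' n, μ {ω | ∑ i ∈ Finset.range n, X i ω ≤ t - c}).toReal := by
    rw [integral_toReal (hGmeas h1 hh1 (t-c)).aemeasurable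
      (ae_lt_top (hGmeas h1 hh1 (t-c)) hG1lint), wald1, hI1, ENNReal.toReal_mul,
      ENNReal.toReal_ofReal hApnn]
  have hintG2 : ∫ ω, (∑' n, h2 (X n ω, R n ω) *
      Set.indicator {ω' | ∑ i ∈ Finset.range n, X i ω' ≤ t}
        (fun _ => (1:ℝ≥0∞)) ω).toReal ∂μ
      = (∫ ω, max (-R 0 ω) 0 ∂μ) *
        (∑' n, μ {ω | ∑ i ∈ Finset.range n, X i ω ≤ t}).toReal := by
    rw [integral_toReal (hGmeas h2 hh2 t).aemeasurable
      (ae_lt_top (hGmeas h2 hh2 t) hG2lint), wald2, hI2, ENNReal.toReal_mul,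
      ENNReal.toReal_ofReal hAmnn]
  have hintG3 : ∫ ω, (∑' n, h3 (X n ω, R n ω) *
      Set.indicator {ω' | ∑ i ∈ Finset.range n, X i ω' ≤ t}
        (fun _ => (1:ℝ≥0∞)) ω).toReal ∂μ
      = (∫ ω, |R 0 ω| ∂μ) *
        (∑' n, μ {ω | ∑ i ∈ Finset.range n, X i ω ≤ t}).toReal := by
    rw [integral_toReal (hGmeas h3 hh3 t).aemeasurable
      (ae_lt_top (hGmeas h3 hh3 t) hG3lint), wald3, hI3, ENNReal.toReal_mul,
      ENNReal.toReal_ofReal hAabsnn]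
  have hlow : (∫ ω, (if X 0 ω ≤ (c:ℝ) then max (R 0 ω) 0 else 0) ∂μ) *
        (∑' n, μ {ω | ∑ i ∈ Finset.range n, X i ω ≤ t - c}).toReal
      - (∫ ω, max (-R 0 ω) 0 ∂μ) *
        (∑' n, μ {ω | ∑ i ∈ Finset.range n, X i ω ≤ t}).toReal
      ≤ ∫ ω, ∑ n ∈ Finset.range (rN X t ω), R n ω ∂μ := by
    rw [← hintG1, ← hintG2, ← integral_sub hG1int hG2int]
    refine integral_mono_ae (hG1int.sub hG2int) hWint ?_
    filter_upwards [hae_main] with ω hω using hω.2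
  have hhigh : ∫ ω, ∑ n ∈ Finset.range (rN X t ω), R n ω ∂μ
      ≤ (∫ ω, |R 0 ω| ∂μ) *
        (∑' n, μ {ω | ∑ i ∈ Finset.range n, X i ω ≤ t}).toReal := by
    rw [← hintG3]
    refine integral_mono_ae hWint hG3int ?_
    filter_upwards [hae_main] with ω hω using le_trans (le_abs_self _) hω.1
  -- final real manipulations
  have hMtR_ub : (∑' n, μ {ω | ∑ i ∈ Finset.range n, X i ω ≤ t}).toReal
      ≤ (t + ((b:ℝ)+1)) / ∫ ω, min (X 0 ω) ((b:ℝ)+1) ∂μ := by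
    rw [le_div_iff₀ hτb_pos]
    linarith [hMt_real]
  have hMtcR_lb : (t - c) / μ[X 0]
      ≤ (∑' n, μ {ω | ∑ i ∈ Finset.range n, X i ω ≤ t - c}).toReal := by
    rw [div_le_iff₀ hτ_pos]
    linarith [hMtc_real]
  constructor
  · have h1' : (∫ ω, (if X 0 ω ≤ (c:ℝ) then max (R 0 ω) 0 else 0) ∂μ) * ((t - c) / μ[X 0])
        ≤ (∫ ω, (if X 0 ω ≤ (c:ℝ) then max (R 0 ω) 0 else 0) ∂μ) *
          (∑' n, μ {ω | ∑ i ∈ Finset.range n, X i ω ≤ t - c}).toReal :=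
      mul_le_mul_of_nonneg_left hMtcR_lb hApnn
    have h2' : (∫ ω, max (-R 0 ω) 0 ∂μ) *
          (∑' n, μ {ω | ∑ i ∈ Finset.range n, X i ω ≤ t}).toReal
        ≤ (∫ ω, max (-R 0 ω) 0 ∂μ) *
          ((t + ((b:ℝ)+1)) / ∫ ω, min (X 0 ω) ((b:ℝ)+1) ∂μ) :=
      mul_le_mul_of_nonneg_left hMtR_ub hAmnn
    gcongr
    linarith [hlow, h1', h2']
  · have h3' : (∫ ω, |R 0 ω| ∂μ) *
          (∑' n, μ {ω | ∑ i ∈ Finset.range n, X i ω ≤ t}).toReal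
        ≤ (∫ ω, |R 0 ω| ∂μ) *
          ((t + ((b:ℝ)+1)) / ∫ ω, min (X 0 ω) ((b:ℝ)+1) ∂μ) :=
      mul_le_mul_of_nonneg_left hMtR_ub hAabsnn
    gcongr
    linarith [hhigh, h3']





/-- Lower-bound half of the expected-reward renewal theorem (via Fatou). -/
theorem renewal_reward_liminf
    {Ω : Type*} [MeasurableSpace Ω] (μ : Measure Ω) [IsProbabilityMeasure μ]
    (X R : ℕ → Ω → ℝ)
    (hmeas : ∀ n, Measurable fun ω => (X n ω, R n ω))
    (hindep : iIndepFun (fun n ω => (X n ω, R n ω)) μ)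
    (hident : ∀ n, IdentDistrib (fun ω => (X n ω, R n ω)) (fun ω => (X 0 ω, R 0 ω)) μ μ)
    (hpos : ∀ n ω, 0 < X n ω)
    (hXint : Integrable (X 0) μ) (hRint : Integrable (R 0) μ)
    (τ r : ℝ) (hτ : μ[X 0] = τ) (hr : μ[R 0] = r) :
    r / τ ≤ Filter.liminf (fun t : ℝ =>
      (∫ ω, (∑ n ∈ Finset.range (rN X t ω), R n ω) ∂μ) / t) atTop := by
  subst hτ hr
  have hXm : Measurable (X 0) := measurable_fst.comp (hmeas 0)
  have hRm : Measurable (R 0) := measurable_snd.comp (hmeas 0)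
  have hτ_pos : 0 < μ[X 0] := by
    rw [integral_pos_iff_support_of_nonneg (fun ω => (hpos 0 ω).le) hXint]
    have hs : Function.support (X 0) = Set.univ := Set.eq_univ_of_forall (fun ω => (hpos 0 ω).ne')
    simp [hs]
  have hτb_int : ∀ b : ℕ, Integrable (fun ω => min (X 0 ω) ((b:ℝ)+1)) μ := by
    intro b
    refine hXint.mono ((hXm.min measurable_const).aestronglyMeasurable) ?_
    filter_upwards with ω
    have h1 : 0 < min (X 0 ω) ((b:ℝ)+1) := lt_min (hpos 0 ω) (by positivity)
    rw [Real.norm_eq_abs, Real.norm_eq_abs, abs_of_pos h1, abs_of_pos (hpos 0 ω)]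
    exact min_le_left _ _
  have hτb_pos : ∀ b : ℕ, (0:ℝ) < ∫ ω, min (X 0 ω) ((b:ℝ)+1) ∂μ := by
    intro b
    rw [integral_pos_iff_support_of_nonneg
      (fun ω => (lt_min (hpos 0 ω) (by positivity)).le) (hτb_int b)]
    have hs : Function.support (fun ω => min (X 0 ω) ((b:ℝ)+1)) = Set.univ :=
      Set.eq_univ_of_forall (fun ω => (lt_min (hpos 0 ω) (by positivity)).ne')
    simp [hs]
  -- eventual upper bound, for coboundedness
  have hub : ∀ᶠ t : ℝ in atTop,
      (∫ ω, (∑ n ∈ Finset.range (rN X t ω), R n ω) ∂μ) / t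
        ≤ (∫ ω, |R 0 ω| ∂μ) * (2 / ∫ ω, min (X 0 ω) (((0:ℕ):ℝ)+1) ∂μ) := by
    filter_upwards [eventually_ge_atTop (((0:ℕ):ℝ) + 1)] with t htc
    have ht1 : (1:ℝ) ≤ t := by push_cast at htc ⊢; linarith
    have htpos : (0:ℝ) < t := by linarith
    refine le_trans (rr_t_bound μ X R hmeas hindep hident hpos hXint hRint 0 0 t htc).2 ?_
    have hτ0pos : 0 < ∫ ω, min (X 0 ω) (((0:ℕ):ℝ)+1) ∂μ := hτb_pos 0
    have hAabsnn : (0:ℝ) ≤ ∫ ω, |R 0 ω| ∂μ := integral_nonneg (fun ω => abs_nonneg _)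
    have h2' : ((t + (((0:ℕ):ℝ)+1)) / ∫ ω, min (X 0 ω) (((0:ℕ):ℝ)+1) ∂μ) / t
        ≤ 2 / ∫ ω, min (X 0 ω) (((0:ℕ):ℝ)+1) ∂μ := by
      rw [div_div, div_le_div_iff₀ (by positivity) hτ0pos]
      have hc0 : ((0:ℕ):ℝ) = 0 := by norm_num
      nlinarith [mul_nonneg (sub_nonneg.2 ht1) hτ0pos.le]
    calc (∫ ω, |R 0 ω| ∂μ) * ((t + (((0:ℕ):ℝ)+1)) / ∫ ω, min (X 0 ω) (((0:ℕ):ℝ)+1) ∂μ) / t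
        = (∫ ω, |R 0 ω| ∂μ) *
          (((t + (((0:ℕ):ℝ)+1)) / ∫ ω, min (X 0 ω) (((0:ℕ):ℝ)+1) ∂μ) / t) := by ring
      _ ≤ _ := mul_le_mul_of_nonneg_left h2' hAabsnn
  have hcobdd : IsCoboundedUnder (· ≥ ·) atTop (fun t : ℝ =>
      (∫ ω, (∑ n ∈ Finset.range (rN X t ω), R n ω) ∂μ) / t) :=
    isCoboundedUnder_ge_of_eventually_le atTop hub
  -- main lower bound, for each pair of truncation levels
  have hmain : ∀ c b : ℕ,
      (∫ ω, (if X 0 ω ≤ (c:ℝ) then max (R 0 ω) 0 else 0) ∂μ) / μ[X 0]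
        - (∫ ω, max (-R 0 ω) 0 ∂μ) / (∫ ω, min (X 0 ω) ((b:ℝ)+1) ∂μ)
      ≤ Filter.liminf (fun t : ℝ =>
        (∫ ω, (∑ n ∈ Finset.range (rN X t ω), R n ω) ∂μ) / t) atTop := by
    intro c b
    have hτbpos : 0 < ∫ ω, min (X 0 ω) ((b:ℝ)+1) ∂μ := hτb_pos b
    have hq1 : Tendsto (fun t : ℝ => (t - (c:ℝ)) / t) atTop (𝓝 1) := by
      have h0 : Tendsto (fun t : ℝ => 1 - (c:ℝ) / t) atTop (𝓝 1) := by
        have := (tendsto_const_nhds (x := (c:ℝ)) (f := atTop)).div_atTop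
          (tendsto_id (α := ℝ))
        simpa using (tendsto_const_nhds (x := (1:ℝ)) (f := atTop)).sub this
      refine h0.congr' ?_
      filter_upwards [eventually_ge_atTop (1:ℝ)] with t ht
      have hne : t ≠ 0 := ne_of_gt (by linarith)
      field_simp
    have hq2 : Tendsto (fun t : ℝ => (t + ((b:ℝ)+1)) / t) atTop (𝓝 1) := by
      have h0 : Tendsto (fun t : ℝ => 1 + ((b:ℝ)+1) / t) atTop (𝓝 1) := by
        have := (tendsto_const_nhds (x := ((b:ℝ)+1)) (f := atTop)).div_atTop
          (tendsto_id (α := ℝ))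
        simpa using (tendsto_const_nhds (x := (1:ℝ)) (f := atTop)).add this
      refine h0.congr' ?_
      filter_upwards [eventually_ge_atTop (1:ℝ)] with t ht
      have hne : t ≠ 0 := ne_of_gt (by linarith)
      field_simp
    have hφ : Tendsto (fun t : ℝ =>
        (∫ ω, (if X 0 ω ≤ (c:ℝ) then max (R 0 ω) 0 else 0) ∂μ) * ((t - (c:ℝ)) / μ[X 0]) / t
        - (∫ ω, max (-R 0 ω) 0 ∂μ) *
            ((t + ((b:ℝ)+1)) / ∫ ω, min (X 0 ω) ((b:ℝ)+1) ∂μ) / t) atTop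
        (𝓝 ((∫ ω, (if X 0 ω ≤ (c:ℝ) then max (R 0 ω) 0 else 0) ∂μ) / μ[X 0]
          - (∫ ω, max (-R 0 ω) 0 ∂μ) / ∫ ω, min (X 0 ω) ((b:ℝ)+1) ∂μ)) := by
      have heq : (fun t : ℝ =>
          (∫ ω, (if X 0 ω ≤ (c:ℝ) then max (R 0 ω) 0 else 0) ∂μ) * ((t - (c:ℝ)) / μ[X 0]) / t
          - (∫ ω, max (-R 0 ω) 0 ∂μ) *
              ((t + ((b:ℝ)+1)) / ∫ ω, min (X 0 ω) ((b:ℝ)+1) ∂μ) / t)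
          = fun t : ℝ =>
            (∫ ω, (if X 0 ω ≤ (c:ℝ) then max (R 0 ω) 0 else 0) ∂μ) / μ[X 0] * ((t - (c:ℝ)) / t)
            - (∫ ω, max (-R 0 ω) 0 ∂μ) / (∫ ω, min (X 0 ω) ((b:ℝ)+1) ∂μ)
                * ((t + ((b:ℝ)+1)) / t) := by
        funext t
        ring
      rw [heq]
      have := ((tendsto_const_nhds
          (x := (∫ ω, (if X 0 ω ≤ (c:ℝ) then max (R 0 ω) 0 else 0) ∂μ) / μ[X 0])
          (f := atTop (α := ℝ))).mul hq1).sub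
        ((tendsto_const_nhds
          (x := (∫ ω, max (-R 0 ω) 0 ∂μ) / ∫ ω, min (X 0 ω) ((b:ℝ)+1) ∂μ)
          (f := atTop (α := ℝ))).mul hq2)
      simpa using this
    refine le_of_forall_sub_le (fun ε hε => ?_)
    refine le_liminf_of_le hcobdd ?_
    filter_upwards [hφ.eventually (eventually_ge_nhds
      (show (∫ ω, (if X 0 ω ≤ (c:ℝ) then max (R 0 ω) 0 else 0) ∂μ) / μ[X 0]
          - (∫ ω, max (-R 0 ω) 0 ∂μ) / (∫ ω, min (X 0 ω) ((b:ℝ)+1) ∂μ) - ε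
        < (∫ ω, (if X 0 ω ≤ (c:ℝ) then max (R 0 ω) 0 else 0) ∂μ) / μ[X 0]
          - (∫ ω, max (-R 0 ω) 0 ∂μ) / (∫ ω, min (X 0 ω) ((b:ℝ)+1) ∂μ) by linarith)),
      eventually_ge_atTop ((c:ℝ)+1)] with t h1 h2
    have h3 := (rr_t_bound μ X R hmeas hindep hident hpos hXint hRint c b t h2).1
    rw [sub_div] at h3
    exact le_trans h1 h3
  -- pass to the limit in the truncation levels
  have hAp_tendsto : Tendsto (fun c : ℕ =>
      ∫ ω, (if X 0 ω ≤ (c:ℝ) then max (R 0 ω) 0 else 0) ∂μ) atTop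
      (𝓝 (∫ ω, max (R 0 ω) 0 ∂μ)) := by
    refine tendsto_integral_of_dominated_convergence (fun ω => |R 0 ω|)
      (fun c => (Measurable.ite (measurableSet_le hXm measurable_const)
        (hRm.max measurable_const) measurable_const).aestronglyMeasurable)
      hRint.abs ?_ ?_
    · intro c
      filter_upwards with ω
      rw [Real.norm_eq_abs]
      split
      · rw [abs_of_nonneg (le_max_right _ _)]
        exact max_le (le_abs_self _) (abs_nonneg _)
      · simp [abs_nonneg]
    · filter_upwards with ω
      apply tendsto_nhds_of_eventually_eq
      filter_upwards [eventually_ge_atTop ⌈X 0 ω⌉₊] with c hc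
      exact if_pos (le_trans (Nat.le_ceil _) (Nat.cast_le.2 hc))
  have hτb_tendsto : Tendsto (fun b : ℕ =>
      ∫ ω, min (X 0 ω) ((b:ℝ)+1) ∂μ) atTop (𝓝 (μ[X 0])) := by
    refine tendsto_integral_of_dominated_convergence (fun ω => |X 0 ω|)
      (fun b => (hXm.min measurable_const).aestronglyMeasurable) hXint.abs ?_ ?_
    · intro b
      filter_upwards with ω
      rw [Real.norm_eq_abs, abs_of_pos (lt_min (hpos 0 ω) (by positivity)),
        abs_of_pos (hpos 0 ω)]
      exact min_le_left _ _
    · filter_upwards with ω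
      apply tendsto_nhds_of_eventually_eq
      filter_upwards [eventually_ge_atTop ⌈X 0 ω⌉₊] with b hb
      refine min_eq_left (le_trans (le_trans (Nat.le_ceil _) (Nat.cast_le.2 hb)) ?_)
      linarith
  have hseq : Tendsto (fun k : ℕ =>
      (∫ ω, (if X 0 ω ≤ (k:ℝ) then max (R 0 ω) 0 else 0) ∂μ) / μ[X 0]
        - (∫ ω, max (-R 0 ω) 0 ∂μ) / (∫ ω, min (X 0 ω) ((k:ℝ)+1) ∂μ)) atTop
      (𝓝 ((∫ ω, max (R 0 ω) 0 ∂μ) / μ[X 0] - (∫ ω, max (-R 0 ω) 0 ∂μ) / μ[X 0])) :=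
    (hAp_tendsto.div_const _).sub
      ((tendsto_const_nhds (x := ∫ ω, max (-R 0 ω) 0 ∂μ)).div hτb_tendsto hτ_pos.ne')
  have hlim := le_of_tendsto' hseq (fun k => hmain k k)
  refine le_trans (le_of_eq ?_) hlim
  rw [show μ[R 0] = (∫ ω, max (R 0 ω) 0 ∂μ) - ∫ ω, max (-R 0 ω) 0 ∂μ by
    rw [← integral_sub hRint.pos_part hRint.neg_part]
    exact integral_congr_ae (Filter.Eventually.of_forall
      (fun ω => (max_zero_sub_max_neg_zero_eq_self _).symm)), sub_div]
end

section
/- Consider the deterministic renewal process with X_i = 1 for all i and end-of-cycle rewards R_i = 0. Within cycle j, partial rewards accrue as C(t) = C_j · f(t − ⌊t⌋), where f(x) = x on [0, 1/2], f(x) = 1 − x on [1/2, 1], and (C_j) are i.i.d. standard Cauchy random variables. Then for every non-integer t > 0, the cumulative reward R(t) = C(t) = C_{⌊t⌋+1} · f(t − ⌊t⌋) is not integrable, i.e., E[|R(t)|] = ∞, even though E[|R_i|] = 0 < ∞ for the end-of-cycle rewards. -/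
open MeasureTheory ProbabilityTheory Filter

lemma cauchy_not_integrable :
    ¬ Integrable (fun x : ℝ => x)
      ((volume : Measure ℝ).withDensity
        (fun x => ENNReal.ofReal (1 / (Real.pi * (1 + x ^ 2))))) := by
  intro h
  have hmeas : Measurable fun x : ℝ => ENNReal.ofReal (1 / (Real.pi * (1 + x ^ 2))) := by
    measurability
  rw [integrable_withDensity_iff hmeas (by
    filter_upwards with x using ENNReal.ofReal_lt_top)] at h
  have h1 : IntegrableOn (fun x : ℝ => x * (ENNReal.ofReal (1 / (Real.pi * (1 + x ^ 2)))).toReal)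
      (Set.Ioi (1 : ℝ)) volume := h.integrableOn
  have h2 : IntegrableOn (fun x : ℝ => 1 / (2 * Real.pi * x)) (Set.Ioi (1 : ℝ)) volume := by
    apply h1.mono' (measurable_const.div (measurable_const.mul measurable_id)).aestronglyMeasurable
    filter_upwards [ae_restrict_mem measurableSet_Ioi] with x hx
    have hx1 : (1 : ℝ) < x := hx
    have hx0 : (0 : ℝ) < x := lt_trans one_pos hx1
    have hpi : (0 : ℝ) < Real.pi := Real.pi_pos
    have hd : (0 : ℝ) < Real.pi * (1 + x ^ 2) := by positivity
    rw [ENNReal.toReal_ofReal (by positivity)]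
    simp only [Pi.div_apply, Pi.mul_apply, id_eq]
    rw [Real.norm_eq_abs, abs_of_nonneg (by positivity)]
    rw [div_le_iff₀ (by positivity)]
    have : x * (1 / (Real.pi * (1 + x ^ 2))) * (2 * Real.pi * x)
        = (2 * x ^ 2) / (1 + x ^ 2) := by
      field_simp
    rw [this, le_div_iff₀ (by positivity)]
    nlinarith
  have h3 : IntegrableOn (fun x : ℝ => x ^ (-1 : ℝ)) (Set.Ioi (1 : ℝ)) volume := by
    apply IntegrableOn.congr_fun (h2.const_mul (2 * Real.pi)) ?_ measurableSet_Ioi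
    intro x hx
    have hx0 : (0 : ℝ) < x := lt_trans one_pos hx
    have hpi : (0 : ℝ) < Real.pi := Real.pi_pos
    simp only [Real.rpow_neg_one]
    field_simp
  rw [integrableOn_Ioi_rpow_iff one_pos] at h3
  norm_num at h3

/-- Counterexample with partial rewards: cycles of length 1 with zero end-of-cycle rewards,
within-cycle reward `C_j · f(t - ⌊t⌋)` with `f` the tent function and `C_j` i.i.d. standard
Cauchy.  For every non-integer `t > 0` the cumulative reward at time `t` is not integrable,
even though the end-of-cycle rewards `R_i = 0` satisfy `E[|R_i|] = 0 < ∞`. -/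
theorem partial_reward_counterexample
    {Ω : Type*} [MeasurableSpace Ω] (μ : Measure Ω) [IsProbabilityMeasure μ]
    (C : ℕ → Ω → ℝ)
    (hmeas : ∀ j, Measurable (C j))
    (hindep : iIndepFun C μ)
    (hcauchy : ∀ j, μ.map (C j) =
      (volume : Measure ℝ).withDensity
        (fun x => ENNReal.ofReal (1 / (Real.pi * (1 + x ^ 2)))))
    (t : ℝ) (ht0 : 0 < t) (ht : ∀ n : ℕ, t ≠ (n : ℝ)) :
    ¬ Integrable
        (fun ω => C ⌊t⌋₊ ω * min (Int.fract t) (1 - Int.fract t)) μ ∧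
    (∫ ω, |(0 : ℝ)| ∂μ) = 0 := by
  constructor
  · intro h
    -- c > 0
    have hfr0 : 0 < Int.fract t := by
      rcases lt_or_eq_of_le (Int.fract_nonneg t) with h' | h'
      · exact h'
      · exfalso
        have : ∃ z : ℤ, t = z := by
          rcases Int.fract_eq_iff.mp h'.symm with ⟨_, _, z, hz⟩
          exact ⟨z, by linarith⟩
        obtain ⟨z, hz⟩ := this
        have hz0 : 0 ≤ z := by exact_mod_cast (hz ▸ ht0).le
        exact ht z.toNat (by rw [hz]; norm_cast; omega)
    have hfr1 : Int.fract t < 1 := Int.fract_lt_one t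
    set c : ℝ := min (Int.fract t) (1 - Int.fract t) with hc
    have hc0 : 0 < c := lt_min hfr0 (by linarith)
    have hC : Integrable (C ⌊t⌋₊) μ := by
      have := h.mul_const c⁻¹
      simpa [mul_assoc, mul_inv_cancel₀ hc0.ne', mul_comm] using this
    have : Integrable (fun x : ℝ => x) (μ.map (C ⌊t⌋₊)) :=
      (integrable_map_measure aestronglyMeasurable_id (hmeas _).aemeasurable).mpr hC
    rw [hcauchy] at this
    exact cauchy_not_integrable this
  · simp
end
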